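/- arXiv:1705.00434 — 16 statements merged into one kernel-verified Lean document; each statement's English description precedes it below -/
import Mathlib

section
/- Let Y be a finite set with at least two elements, F : Y → ℝ a function, β ∈ ℝ, and c : Y → ℝⁿ vectors such that for every unit vector v ∈ ℝⁿ there exists s ∈ Y with v · c(s) > 0. Then the function u ↦ ∑_{s∈Y} exp(u·c(s) − βF(s)) on ℝⁿ tends to infinity as ‖u‖ → ∞, and it attains a unique global minimum at the unique point u(β) where ∑_{s∈Y} c(s) exp(u(β)·c(s) − βF(s)) = 0. -/
open Real Filter
open scoped InnerProductSpace BigOperators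

set_option maxHeartbeats 1000000

theorem stmt0 (n : ℕ) (hn : 0 < n) (Y : Type*) [Fintype Y] (hY : 2 ≤ Fintype.card Y)
    (F : Y → ℝ) (β : ℝ) (c : Y → EuclideanSpace ℝ (Fin n))
    (hc : ∀ v : EuclideanSpace ℝ (Fin n), ‖v‖ = 1 → ∃ s, 0 < ⟪v, c s⟫_ℝ) :
    Filter.Tendsto (fun u : EuclideanSpace ℝ (Fin n) => ∑ s, Real.exp (⟪u, c s⟫_ℝ - β * F s))
      (Filter.comap norm Filter.atTop) Filter.atTop ∧
    ∃! u₀ : EuclideanSpace ℝ (Fin n),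
      (∑ s, Real.exp (⟪u₀, c s⟫_ℝ - β * F s) • c s = 0) ∧
      ∀ u, u ≠ u₀ →
        ∑ s, Real.exp (⟪u₀, c s⟫_ℝ - β * F s) < ∑ s, Real.exp (⟪u, c s⟫_ℝ - β * F s) := by
  set f : EuclideanSpace ℝ (Fin n) → ℝ :=
    fun u => ∑ s, Real.exp (⟪u, c s⟫_ℝ - β * F s) with hf
  have hcard : 0 < Fintype.card Y := by omega
  have hYne : Nonempty Y := Fintype.card_pos_iff.mp hcard
  have hne : (Finset.univ : Finset Y).Nonempty := Finset.univ_nonempty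
  -- continuity of f
  have hfc : Continuous f := by
    refine continuous_finset_sum _ fun s _ => ?_
    exact Real.continuous_exp.comp ((continuous_id.inner continuous_const).sub continuous_const)
  -- uniform positivity constant ε
  obtain ⟨ε, hε, hεu⟩ :
      ∃ ε > 0, ∀ u : EuclideanSpace ℝ (Fin n), ∃ s, ε * ‖u‖ ≤ ⟪u, c s⟫_ℝ := by
    set Φ : EuclideanSpace ℝ (Fin n) → ℝ :=
      fun v => Finset.univ.sup' hne (fun s => ⟪v, c s⟫_ℝ) with hΦ
    have hΦc : Continuous Φ :=
      Continuous.finset_sup'_apply hne fun s _ => continuous_id.inner continuous_const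
    have hsph : IsCompact (Metric.sphere (0 : EuclideanSpace ℝ (Fin n)) 1) :=
      isCompact_sphere _ _
    have hsne : (Metric.sphere (0 : EuclideanSpace ℝ (Fin n)) 1).Nonempty := by
      haveI : Nontrivial (EuclideanSpace ℝ (Fin n)) :=
        Module.nontrivial_of_finrank_pos (R := ℝ) (by simpa using hn)
      exact NormedSpace.sphere_nonempty.2 (by norm_num)
    obtain ⟨v₀, hv₀, hmin⟩ := hsph.exists_isMinOn hsne hΦc.continuousOn
    have hv₀n : ‖v₀‖ = 1 := by simpa using hv₀
    obtain ⟨s₀, hs₀⟩ := hc v₀ hv₀n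
    have hεpos : 0 < Φ v₀ := lt_of_lt_of_le hs₀ (Finset.le_sup' (fun s => ⟪v₀, c s⟫_ℝ) (Finset.mem_univ s₀))
    refine ⟨Φ v₀, hεpos, fun u => ?_⟩
    rcases eq_or_ne u 0 with rfl | hu
    · exact ⟨s₀, by simp⟩
    · have hun : 0 < ‖u‖ := norm_pos_iff.2 hu
      have hmem : (‖u‖⁻¹ • u) ∈ Metric.sphere (0 : EuclideanSpace ℝ (Fin n)) 1 := by
        simp [norm_smul, abs_of_pos (inv_pos.2 hun), inv_mul_cancel₀ hun.ne']
      have hle : Φ v₀ ≤ Φ (‖u‖⁻¹ • u) := hmin hmem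
      obtain ⟨s, -, hs⟩ := Finset.exists_mem_eq_sup' hne (fun s => ⟪(‖u‖⁻¹ • u), c s⟫_ℝ)
      refine ⟨s, ?_⟩
      have h1 : Φ v₀ ≤ ⟪(‖u‖⁻¹ • u), c s⟫_ℝ := by rw [← hs]; exact hle
      have h2 : ⟪(‖u‖⁻¹ • u), c s⟫_ℝ = ‖u‖⁻¹ * ⟪u, c s⟫_ℝ := real_inner_smul_left _ _ _
      rw [h2] at h1
      calc Φ v₀ * ‖u‖ ≤ (‖u‖⁻¹ * ⟪u, c s⟫_ℝ) * ‖u‖ := by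
            exact mul_le_mul_of_nonneg_right h1 hun.le
        _ = ⟪u, c s⟫_ℝ := by field_simp
  -- lower bound and coercivity
  set B : ℝ := Finset.univ.sup' hne (fun s => β * F s) with hB
  have hlow : ∀ u, Real.exp (ε * ‖u‖ - B) ≤ f u := by
    intro u
    obtain ⟨s, hs⟩ := hεu u
    have h1 : Real.exp (ε * ‖u‖ - B) ≤ Real.exp (⟪u, c s⟫_ℝ - β * F s) := by
      apply Real.exp_le_exp.2
      have : β * F s ≤ B := Finset.le_sup' (fun s => β * F s) (Finset.mem_univ s)
      linarith
    refine h1.trans ?_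
    exact Finset.single_le_sum (f := fun t => Real.exp (⟪u, c t⟫_ℝ - β * F t))
      (fun t _ => (Real.exp_pos _).le) (Finset.mem_univ s)
  have hcoer : Filter.Tendsto f (Filter.comap norm Filter.atTop) Filter.atTop := by
    have h1 : Filter.Tendsto (fun u : EuclideanSpace ℝ (Fin n) => Real.exp (ε * ‖u‖ - B))
        (Filter.comap norm Filter.atTop) Filter.atTop := by
      apply Real.tendsto_exp_atTop.comp
      apply Filter.tendsto_atTop_add_const_right
      exact (Filter.tendsto_const_mul_atTop_of_pos hε).2 tendsto_comap
    exact tendsto_atTop_mono hlow h1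
  refine ⟨hcoer, ?_⟩
  -- existence of a global minimizer
  have hcocompact : Filter.Tendsto f (cocompact (EuclideanSpace ℝ (Fin n))) Filter.atTop := by
    rwa [comap_norm_atTop, Metric.cobounded_eq_cocompact] at hcoer
  obtain ⟨u₀, hu₀⟩ := hfc.exists_forall_le hcocompact
  -- strict minimality
  have hstrict : ∀ u, u ≠ u₀ → f u₀ < f u := by
    intro u hu
    rcases lt_or_ge (f u₀) (f u) with h | h
    · exact h
    have heq : f u = f u₀ := le_antisymm h (hu₀ u)
    exfalso
    -- midpoint
    set m : EuclideanSpace ℝ (Fin n) := (1/2 : ℝ) • u + (1/2 : ℝ) • u₀ with hm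
    have hsub : u - u₀ ≠ 0 := sub_ne_zero.2 hu
    have hns : (0:ℝ) < ‖u - u₀‖ := norm_pos_iff.2 hsub
    obtain ⟨s₀, hs₀⟩ := hc (‖u - u₀‖⁻¹ • (u - u₀)) (by
      simp [norm_smul, abs_of_pos (inv_pos.2 hns), inv_mul_cancel₀ hns.ne'])
    have hdiff : ⟪u, c s₀⟫_ℝ ≠ ⟪u₀, c s₀⟫_ℝ := by
      rw [real_inner_smul_left] at hs₀
      have : 0 < ⟪u - u₀, c s₀⟫_ℝ := by nlinarith [inv_pos.2 hns]
      rw [inner_sub_left] at this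
      linarith
    have hterm : ∀ s, Real.exp (⟪m, c s⟫_ℝ - β * F s) ≤
        (1/2) * Real.exp (⟪u, c s⟫_ℝ - β * F s) + (1/2) * Real.exp (⟪u₀, c s⟫_ℝ - β * F s) := by
      intro s
      have harg : ⟪m, c s⟫_ℝ - β * F s =
          (1/2) * (⟪u, c s⟫_ℝ - β * F s) + (1/2) * (⟪u₀, c s⟫_ℝ - β * F s) := by
        rw [hm, inner_add_left, real_inner_smul_left, real_inner_smul_left]; ring
      rw [harg]
      exact convexOn_exp.2 trivial trivial (by norm_num) (by norm_num) (by norm_num)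
    have hterm₀ : Real.exp (⟪m, c s₀⟫_ℝ - β * F s₀) <
        (1/2) * Real.exp (⟪u, c s₀⟫_ℝ - β * F s₀) + (1/2) * Real.exp (⟪u₀, c s₀⟫_ℝ - β * F s₀) := by
      have harg : ⟪m, c s₀⟫_ℝ - β * F s₀ =
          (1/2) * (⟪u, c s₀⟫_ℝ - β * F s₀) + (1/2) * (⟪u₀, c s₀⟫_ℝ - β * F s₀) := by
        rw [hm, inner_add_left, real_inner_smul_left, real_inner_smul_left]; ring
      rw [harg]
      exact strictConvexOn_exp.2 trivial trivial (by simpa using hdiff) (by norm_num) (by norm_num)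
        (by norm_num)
    have hsum : f m < (1/2) * f u + (1/2) * f u₀ := by
      rw [hf]
      simp only
      rw [Finset.mul_sum, Finset.mul_sum, ← Finset.sum_add_distrib]
      exact Finset.sum_lt_sum (fun s _ => hterm s) ⟨s₀, Finset.mem_univ s₀, hterm₀⟩
    rw [heq] at hsum
    have : f m < f u₀ := by linarith
    exact absurd (hu₀ m) (not_le.2 this)
  -- gradient vanishes at u₀
  have hgrad : ∑ s, Real.exp (⟪u₀, c s⟫_ℝ - β * F s) • c s = 0 := by
    set g : EuclideanSpace ℝ (Fin n) := ∑ s, Real.exp (⟪u₀, c s⟫_ℝ - β * F s) • c s with hg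
    have hinner : ∀ v : EuclideanSpace ℝ (Fin n), ⟪v, g⟫_ℝ = 0 := by
      intro v
      set h : ℝ → ℝ := fun t => ∑ s, Real.exp ((⟪u₀, c s⟫_ℝ - β * F s) + t * ⟪v, c s⟫_ℝ) with hh
      have hderiv : HasDerivAt h (∑ s, ⟪v, c s⟫_ℝ * Real.exp (⟪u₀, c s⟫_ℝ - β * F s)) 0 := by
        have : ∀ s ∈ Finset.univ, HasDerivAt
            (fun t : ℝ => Real.exp ((⟪u₀, c s⟫_ℝ - β * F s) + t * ⟪v, c s⟫_ℝ))
            (⟪v, c s⟫_ℝ * Real.exp (⟪u₀, c s⟫_ℝ - β * F s)) 0 := by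
          intro s _
          have h1 : HasDerivAt (fun t : ℝ => (⟪u₀, c s⟫_ℝ - β * F s) + t * ⟪v, c s⟫_ℝ)
              (⟪v, c s⟫_ℝ) 0 := by
            simpa using ((hasDerivAt_id (0:ℝ)).mul_const (⟪v, c s⟫_ℝ)).const_add
              (⟪u₀, c s⟫_ℝ - β * F s)
          have := (Real.hasDerivAt_exp _).comp 0 h1
          simpa [mul_comm, Function.comp_def] using this
        exact HasDerivAt.fun_sum this
      have hlocmin : IsLocalMin h 0 := by
        apply Filter.Eventually.of_forall
        intro t
        have hval : ∀ r : ℝ, h r = f (u₀ + r • v) := by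
          intro r
          rw [hh, hf]
          refine Finset.sum_congr rfl fun s _ => ?_
          rw [inner_add_left, real_inner_smul_left]
          ring_nf
        have h0 : u₀ + (0:ℝ) • v = u₀ := by simp
        rw [hval t, hval 0, h0]
        exact hu₀ _
      have hzero := hlocmin.hasDerivAt_eq_zero hderiv
      have hcomp : ⟪v, g⟫_ℝ = ∑ s, ⟪v, c s⟫_ℝ * Real.exp (⟪u₀, c s⟫_ℝ - β * F s) := by
        rw [hg, inner_sum]
        exact Finset.sum_congr rfl fun s _ => by rw [real_inner_smul_right]; ring
      rw [hcomp]
      exact hzero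
    have := hinner g
    exact (inner_self_eq_zero (𝕜 := ℝ)).mp this
  refine ⟨u₀, ⟨hgrad, hstrict⟩, ?_⟩
  intro u₁ ⟨_, hu₁⟩
  by_contra hne'
  exact absurd (hstrict u₁ hne') (not_lt.2 (hu₁ u₀ (Ne.symm hne')).le)
end

section
/- Let Y be a finite set, F : Y → ℝ, and c : Y → ℝⁿ such that for every unit vector v there is an s ∈ Y with v·c(s) > 0. Suppose u(β) is the minimizer of u ↦ ∑_{s∈Y} exp(u·c(s) − βF(s)) and that ∑_{s∈Y} exp(u(β)·c(s) − βF(s)) < 1. Then for every unit vector v ∈ ℝⁿ there is a unique t_β(v) > 0 such that ∑_{s∈Y} exp((u(β)+t_β(v)v)·c(s) − βF(s)) = 1, and the map v ↦ u(β) + t_β(v)v is a homeomorphism from the sphere S^{n−1} onto the set Q(β) = { u ∈ ℝⁿ : ∑_{s∈Y} exp(u·c(s) − βF(s)) = 1 }. -/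
open Real Filter
open scoped InnerProductSpace BigOperators

set_option maxHeartbeats 1000000 in
theorem stmt1 (n : ℕ) (hn : 0 < n) (Y : Type*) [Fintype Y] (hY : 2 ≤ Fintype.card Y)
    (F : Y → ℝ) (β : ℝ) (c : Y → EuclideanSpace ℝ (Fin n))
    (hc : ∀ v : EuclideanSpace ℝ (Fin n), ‖v‖ = 1 → ∃ s, 0 < ⟪v, c s⟫_ℝ)
    (uβ : EuclideanSpace ℝ (Fin n))
    (hmin : ∀ u, u ≠ uβ →
      ∑ s, Real.exp (⟪uβ, c s⟫_ℝ - β * F s) < ∑ s, Real.exp (⟪u, c s⟫_ℝ - β * F s))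
    (hlt : ∑ s, Real.exp (⟪uβ, c s⟫_ℝ - β * F s) < 1) :
    ∃ T : EuclideanSpace ℝ (Fin n) → ℝ,
      (∀ v, ‖v‖ = 1 → 0 < T v ∧
        (∑ s, Real.exp (⟪uβ + T v • v, c s⟫_ℝ - β * F s) = 1) ∧
        ∀ t : ℝ, 0 < t → (∑ s, Real.exp (⟪uβ + t • v, c s⟫_ℝ - β * F s) = 1) → t = T v) ∧
      ∃ H : Metric.sphere (0 : EuclideanSpace ℝ (Fin n)) 1 ≃ₜ
          {u : EuclideanSpace ℝ (Fin n) // ∑ s, Real.exp (⟪u, c s⟫_ℝ - β * F s) = 1},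
        ∀ v : Metric.sphere (0 : EuclideanSpace ℝ (Fin n)) 1,
          (H v : EuclideanSpace ℝ (Fin n)) = uβ + T v • (v : EuclideanSpace ℝ (Fin n)) := by
  classical
  set f : EuclideanSpace ℝ (Fin n) → ℝ :=
    fun u => ∑ s, Real.exp (⟪u, c s⟫_ℝ - β * F s) with hfdef
  have hfc : Continuous f := by
    apply continuous_finset_sum
    intro s _
    exact Real.continuous_exp.comp ((continuous_id.inner continuous_const).sub continuous_const)
  have hconv : ∀ x y : EuclideanSpace ℝ (Fin n), ∀ a b : ℝ, 0 ≤ a → 0 ≤ b → a + b = 1 →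
      f (a • x + b • y) ≤ a * f x + b * f y := by
    intro x y a b ha hb hab
    rw [hfdef]; simp only
    rw [Finset.mul_sum, Finset.mul_sum, ← Finset.sum_add_distrib]
    refine Finset.sum_le_sum fun s _ => ?_
    have h1 : ⟪a • x + b • y, c s⟫_ℝ - β * F s
        = a * (⟪x, c s⟫_ℝ - β * F s) + b * (⟪y, c s⟫_ℝ - β * F s) := by
      rw [inner_add_left, real_inner_smul_left, real_inner_smul_left]
      linear_combination (β * F s) * hab
    rw [h1]
    exact convexOn_exp.2 (Set.mem_univ _) (Set.mem_univ _) ha hb hab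
  have hminf : ∀ u, u ≠ uβ → f uβ < f u := hmin
  have hltf : f uβ < 1 := hlt
  have hmono : ∀ (v : EuclideanSpace ℝ (Fin n)), v ≠ 0 → ∀ t₁ t₂ : ℝ, 0 ≤ t₁ → t₁ < t₂ →
      f (uβ + t₁ • v) < f (uβ + t₂ • v) := by
    intro v hv t₁ t₂ ht₁ h12
    have h2pos : 0 < t₂ := lt_of_le_of_lt ht₁ h12
    have hne : uβ + t₂ • v ≠ uβ := by
      intro h
      apply hv
      have h' : t₂ • v = 0 := by
        have := congrArg (fun w => w - uβ) h
        simpa [add_sub_cancel_left] using this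
      rcases smul_eq_zero.mp h' with h'' | h''
      · exact absurd h'' (ne_of_gt h2pos)
      · exact h''
    have hlt0 : f uβ < f (uβ + t₂ • v) := hminf _ hne
    rcases eq_or_lt_of_le ht₁ with rfl | ht₁pos
    · simpa using hlt0
    · have ha : (0:ℝ) < t₁ / t₂ := div_pos ht₁pos h2pos
      have hb : (0:ℝ) < 1 - t₁ / t₂ := by
        have : t₁ / t₂ < 1 := (div_lt_one h2pos).mpr h12
        linarith
      have hcomb : uβ + t₁ • v = (1 - t₁/t₂) • uβ + (t₁/t₂) • (uβ + t₂ • v) := by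
        have h : (t₁/t₂) * t₂ = t₁ := div_mul_cancel₀ _ (ne_of_gt h2pos)
        rw [smul_add, smul_smul, h]
        module
      calc f (uβ + t₁ • v) ≤ (1 - t₁/t₂) * f uβ + (t₁/t₂) * f (uβ + t₂ • v) := by
            rw [hcomb]; exact hconv _ _ _ _ hb.le ha.le (by ring)
        _ < (1 - t₁/t₂) * f (uβ + t₂ • v) + (t₁/t₂) * f (uβ + t₂ • v) := by nlinarith
        _ = f (uβ + t₂ • v) := by ring
  have hTex : ∀ v : EuclideanSpace ℝ (Fin n), ‖v‖ = 1 →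
      ∃ t : ℝ, (0 < t ∧ f (uβ + t • v) = 1) ∧
        ∀ t' : ℝ, 0 < t' → f (uβ + t' • v) = 1 → t' = t := by
    intro v hv
    have hvne : v ≠ 0 := by intro h; rw [h, norm_zero] at hv; norm_num at hv
    obtain ⟨s, hs⟩ := hc v hv
    set t₀ : ℝ := max 1 ((β * F s - ⟪uβ, c s⟫_ℝ) / ⟪v, c s⟫_ℝ) with ht₀
    have ht₀pos : (0:ℝ) < t₀ := lt_of_lt_of_le one_pos (le_max_left _ _)
    have hge : (1:ℝ) ≤ f (uβ + t₀ • v) := by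
      have h1 : β * F s - ⟪uβ, c s⟫_ℝ ≤ t₀ * ⟪v, c s⟫_ℝ := by
        have h2 := le_max_right 1 ((β * F s - ⟪uβ, c s⟫_ℝ) / ⟪v, c s⟫_ℝ)
        calc β * F s - ⟪uβ, c s⟫_ℝ
            = ((β * F s - ⟪uβ, c s⟫_ℝ) / ⟪v, c s⟫_ℝ) * ⟪v, c s⟫_ℝ :=
              (div_mul_cancel₀ _ (ne_of_gt hs)).symm
          _ ≤ t₀ * ⟪v, c s⟫_ℝ := by nlinarith
      have h2 : (1:ℝ) ≤ Real.exp (⟪uβ + t₀ • v, c s⟫_ℝ - β * F s) := by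
        rw [inner_add_left, real_inner_smul_left]
        calc (1:ℝ) = Real.exp 0 := Real.exp_zero.symm
          _ ≤ _ := Real.exp_le_exp.mpr (by linarith)
      have h3 : Real.exp (⟪uβ + t₀ • v, c s⟫_ℝ - β * F s) ≤ f (uβ + t₀ • v) := by
        rw [hfdef]
        exact Finset.single_le_sum (f := fun j => Real.exp (⟪uβ + t₀ • v, c j⟫_ℝ - β * F j))
          (fun j _ => (Real.exp_pos _).le) (Finset.mem_univ s)
      linarith
    have hcont : ContinuousOn (fun t : ℝ => f (uβ + t • v)) (Set.Icc 0 t₀) :=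
      (hfc.comp (continuous_const.add (continuous_id.smul continuous_const))).continuousOn
    have h0 : f (uβ + (0:ℝ) • v) < 1 := by simpa using hltf
    have hsub := intermediate_value_Icc ht₀pos.le hcont
    obtain ⟨t, htmem, htval⟩ := hsub ⟨h0.le, hge⟩
    replace htval : f (uβ + t • v) = 1 := htval
    have htpos : 0 < t := by
      rcases lt_or_eq_of_le htmem.1 with h | h
      · exact h
      · exfalso; rw [← h] at htval; rw [htval] at h0; norm_num at h0
    refine ⟨t, ⟨htpos, htval⟩, ?_⟩
    intro t' ht' hval'
    by_contra hne
    rcases lt_or_gt_of_ne hne with h | h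
    · have := hmono v hvne t' t ht'.le h
      rw [hval', htval] at this; exact lt_irrefl _ this
    · have := hmono v hvne t t' htpos.le h
      rw [hval', htval] at this; exact lt_irrefl _ this
  choose! T hT using hTex
  haveI hYne : Nonempty Y := Fintype.card_pos_iff.mp (by omega)
  refine ⟨T, fun v hv => ⟨(hT v hv).1.1, (hT v hv).1.2,
    fun t ht heq => (hT v hv).2 t ht heq⟩, ?_⟩
  have hsC : IsCompact (Metric.sphere (0 : EuclideanSpace ℝ (Fin n)) 1) := isCompact_sphere 0 1
  haveI : Nontrivial (EuclideanSpace ℝ (Fin n)) := by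
    refine ⟨⟨EuclideanSpace.single ⟨0, hn⟩ (1:ℝ), 0, fun h => ?_⟩⟩
    have := congrArg (fun w : EuclideanSpace ℝ (Fin n) => ‖w‖) h
    simp [EuclideanSpace.norm_single] at this
  have hsne : (Metric.sphere (0 : EuclideanSpace ℝ (Fin n)) 1).Nonempty :=
    NormedSpace.sphere_nonempty.mpr zero_le_one
  have hune : (Finset.univ : Finset Y).Nonempty := Finset.univ_nonempty
  set m : EuclideanSpace ℝ (Fin n) → ℝ :=
    fun v => Finset.univ.sup' hune (fun s => ⟪v, c s⟫_ℝ) with hmdef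
  have hmc : Continuous m :=
    Continuous.finset_sup'_apply hune (fun s _ => continuous_id.inner continuous_const)
  obtain ⟨v₀, hv₀mem, hv₀min⟩ := hsC.exists_isMinOn hsne hmc.continuousOn
  have hεpos : 0 < m v₀ := by
    obtain ⟨s, hs⟩ := hc v₀ (mem_sphere_zero_iff_norm.mp hv₀mem)
    refine lt_of_lt_of_le hs ?_
    simp only [hmdef]
    exact Finset.le_sup' (fun s => ⟪v₀, c s⟫_ℝ) (Finset.mem_univ s)
  set C : ℝ := Finset.univ.sup' hune (fun s => β * F s - ⟪uβ, c s⟫_ℝ) with hCdef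
  have hQne : ∀ u : EuclideanSpace ℝ (Fin n), f u = 1 → u ≠ uβ := by
    intro u hu h
    rw [h] at hu; rw [hu] at hltf; exact lt_irrefl _ hltf
  have hbdd : ∀ u : EuclideanSpace ℝ (Fin n), f u = 1 → ‖u - uβ‖ ≤ C / m v₀ := by
    intro u hu
    have hne := sub_ne_zero.mpr (hQne u hu)
    have hr : 0 < ‖u - uβ‖ := norm_pos_iff.mpr hne
    set w : EuclideanSpace ℝ (Fin n) := ‖u - uβ‖⁻¹ • (u - uβ) with hwdef
    have hw : ‖w‖ = 1 := norm_smul_inv_norm hne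
    have hwmem : w ∈ Metric.sphere (0 : EuclideanSpace ℝ (Fin n)) 1 :=
      mem_sphere_zero_iff_norm.mpr hw
    obtain ⟨s, -, hseq⟩ := Finset.exists_mem_eq_sup' hune (fun s => ⟪w, c s⟫_ℝ)
    have hsε : m v₀ ≤ ⟪w, c s⟫_ℝ := by
      have h' : m v₀ ≤ m w := hv₀min hwmem
      have h'' : m w = ⟪w, c s⟫_ℝ := by
        simp only [hmdef]
        exact hseq
      rw [h''] at h'
      exact h'
    have hexp : Real.exp (⟪u, c s⟫_ℝ - β * F s) ≤ 1 := by
      rw [← hu, hfdef]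
      exact Finset.single_le_sum (f := fun j => Real.exp (⟪u, c j⟫_ℝ - β * F j))
        (fun j _ => (Real.exp_pos _).le) (Finset.mem_univ s)
    have hle0 : ⟪u, c s⟫_ℝ - β * F s ≤ 0 := Real.exp_le_one_iff.mp hexp
    have hdecomp : ⟪u, c s⟫_ℝ = ⟪uβ, c s⟫_ℝ + ‖u - uβ‖ * ⟪w, c s⟫_ℝ := by
      have husum : u = uβ + ‖u - uβ‖ • w := by
        rw [hwdef, smul_smul, mul_inv_cancel₀ (ne_of_gt hr), one_smul]
        abel
      conv_lhs => rw [husum]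
      rw [inner_add_left, real_inner_smul_left]
    have hC : β * F s - ⟪uβ, c s⟫_ℝ ≤ C := by
      simp only [hCdef]
      exact Finset.le_sup' (fun s => β * F s - ⟪uβ, c s⟫_ℝ) (Finset.mem_univ s)
    rw [le_div_iff₀ hεpos]
    rw [hdecomp] at hle0
    nlinarith [hr]
  have hQclosed : IsClosed {u : EuclideanSpace ℝ (Fin n) |
      ∑ s, Real.exp (⟪u, c s⟫_ℝ - β * F s) = 1} := by
    have hcc : Continuous fun u : EuclideanSpace ℝ (Fin n) =>
        ∑ s, Real.exp (⟪u, c s⟫_ℝ - β * F s) := by rw [← hfdef]; exact hfc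
    exact isClosed_eq hcc continuous_const
  have hQbdd : Bornology.IsBounded {u : EuclideanSpace ℝ (Fin n) |
      ∑ s, Real.exp (⟪u, c s⟫_ℝ - β * F s) = 1} := by
    apply (Metric.isBounded_closedBall (x := uβ) (r := C / m v₀)).subset
    intro u hu
    rw [Metric.mem_closedBall, dist_eq_norm]
    exact hbdd u hu
  have hQcomp := Metric.isCompact_of_isClosed_isBounded hQclosed hQbdd
  haveI hQcs : CompactSpace
      {u : EuclideanSpace ℝ (Fin n) // ∑ s, Real.exp (⟪u, c s⟫_ℝ - β * F s) = 1} :=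
    isCompact_iff_compactSpace.mp hQcomp
  let Φ : {u : EuclideanSpace ℝ (Fin n) // ∑ s, Real.exp (⟪u, c s⟫_ℝ - β * F s) = 1} →
      Metric.sphere (0 : EuclideanSpace ℝ (Fin n)) 1 :=
    fun u => ⟨‖(u : EuclideanSpace ℝ (Fin n)) - uβ‖⁻¹ • ((u : EuclideanSpace ℝ (Fin n)) - uβ),
      mem_sphere_zero_iff_norm.mpr (norm_smul_inv_norm (sub_ne_zero.mpr (hQne u u.2)))⟩
  have hΦc : Continuous Φ := by
    apply Continuous.subtype_mk
    have h1 : Continuous fun u : {u : EuclideanSpace ℝ (Fin n) //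
        ∑ s, Real.exp (⟪u, c s⟫_ℝ - β * F s) = 1} => (u : EuclideanSpace ℝ (Fin n)) - uβ :=
      continuous_subtype_val.sub continuous_const
    exact (h1.norm.inv₀ fun u => norm_ne_zero_iff.mpr (sub_ne_zero.mpr (hQne u u.2))).smul h1
  have hΦval : ∀ (v : EuclideanSpace ℝ (Fin n)) (hv : ‖v‖ = 1)
      (hq : ∑ s, Real.exp (⟪uβ + T v • v, c s⟫_ℝ - β * F s) = 1),
      (Φ ⟨uβ + T v • v, hq⟩ : EuclideanSpace ℝ (Fin n)) = v := by
    intro v hv hq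
    show ‖uβ + T v • v - uβ‖⁻¹ • (uβ + T v • v - uβ) = v
    have h1 : uβ + T v • v - uβ = T v • v := by abel
    rw [h1, norm_smul, hv, Real.norm_eq_abs, abs_of_pos (hT v hv).1.1, mul_one, smul_smul,
      inv_mul_cancel₀ (ne_of_gt (hT v hv).1.1), one_smul]
  have hinj : Function.Injective Φ := by
    intro u₁ u₂ h
    have hval := congrArg Subtype.val h
    have hne₁ : (u₁ : EuclideanSpace ℝ (Fin n)) - uβ ≠ 0 := sub_ne_zero.mpr (hQne _ u₁.2)
    have hne₂ : (u₂ : EuclideanSpace ℝ (Fin n)) - uβ ≠ 0 := sub_ne_zero.mpr (hQne _ u₂.2)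
    have hr₁pos : 0 < ‖(u₁ : EuclideanSpace ℝ (Fin n)) - uβ‖ := norm_pos_iff.mpr hne₁
    have hr₂pos : 0 < ‖(u₂ : EuclideanSpace ℝ (Fin n)) - uβ‖ := norm_pos_iff.mpr hne₂
    set w : EuclideanSpace ℝ (Fin n) :=
      ‖(u₁ : EuclideanSpace ℝ (Fin n)) - uβ‖⁻¹ • ((u₁ : EuclideanSpace ℝ (Fin n)) - uβ)
      with hwdef
    have hw : ‖w‖ = 1 := norm_smul_inv_norm hne₁
    have h1 : (u₁ : EuclideanSpace ℝ (Fin n)) =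
        uβ + ‖(u₁ : EuclideanSpace ℝ (Fin n)) - uβ‖ • w := by
      rw [hwdef, smul_smul, mul_inv_cancel₀ (ne_of_gt hr₁pos), one_smul]
      abel
    have hval' : w = ‖(u₂ : EuclideanSpace ℝ (Fin n)) - uβ‖⁻¹ •
        ((u₂ : EuclideanSpace ℝ (Fin n)) - uβ) := hval
    have h2 : (u₂ : EuclideanSpace ℝ (Fin n)) =
        uβ + ‖(u₂ : EuclideanSpace ℝ (Fin n)) - uβ‖ • w := by
      rw [hval', smul_smul, mul_inv_cancel₀ (ne_of_gt hr₂pos), one_smul]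
      abel
    have e₁ : ‖(u₁ : EuclideanSpace ℝ (Fin n)) - uβ‖ = T w :=
      (hT w hw).2 _ hr₁pos (by rw [← h1]; exact u₁.2)
    have e₂ : ‖(u₂ : EuclideanSpace ℝ (Fin n)) - uβ‖ = T w :=
      (hT w hw).2 _ hr₂pos (by rw [← h2]; exact u₂.2)
    apply Subtype.ext
    rw [h1, h2, e₁, e₂]
  have hsurj : Function.Surjective Φ := by
    intro v
    have hv : ‖(v : EuclideanSpace ℝ (Fin n))‖ = 1 := mem_sphere_zero_iff_norm.mp v.2
    exact ⟨⟨uβ + T v • (v : EuclideanSpace ℝ (Fin n)), (hT _ hv).1.2⟩,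
      Subtype.ext (hΦval _ hv _)⟩
  let e := Equiv.ofBijective Φ ⟨hinj, hsurj⟩
  have hec : Continuous e := hΦc
  let Hom := hec.homeoOfEquivCompactToT2
  refine ⟨Hom.symm, fun v => ?_⟩
  have hv : ‖(v : EuclideanSpace ℝ (Fin n))‖ = 1 := mem_sphere_zero_iff_norm.mp v.2
  have hq : ∑ s, Real.exp (⟪uβ + T v • (v : EuclideanSpace ℝ (Fin n)), c s⟫_ℝ - β * F s) = 1 :=
    (hT _ hv).1.2
  have hHom : Hom ⟨uβ + T v • (v : EuclideanSpace ℝ (Fin n)), hq⟩ = v :=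
    Subtype.ext (hΦval _ hv _)
  have h2 : Hom.symm v = ⟨uβ + T v • (v : EuclideanSpace ℝ (Fin n)), hq⟩ := by
    have h3 := congrArg Hom.symm hHom
    rw [Homeomorph.symm_apply_apply] at h3
    exact h3.symm
  rw [h2]
end

section
/- Let Y be a finite set, F : Y → ℝ with F(s) > 0 for all s ∈ Y, and c : Y → ℝⁿ such that for every nonzero v ∈ ℝⁿ there is s ∈ Y with v·c(s) ≥ 0. Then for each u ∈ ℝⁿ there exists a unique β(u) > 0 such that ∑_{s∈Y} exp(−β(u)F(s) + u·c(s)) = 1, and the function u ↦ β(u) is continuous on ℝⁿ. -/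
open Real Filter
open scoped InnerProductSpace BigOperators

theorem stmt2 (n : ℕ) (hn : 0 < n) (Y : Type*) [Fintype Y] (hY : 2 ≤ Fintype.card Y)
    (F : Y → ℝ) (hF : ∀ s, 0 < F s) (c : Y → EuclideanSpace ℝ (Fin n))
    (hc : ∀ v : EuclideanSpace ℝ (Fin n), v ≠ 0 → ∃ s, 0 ≤ ⟪v, c s⟫_ℝ) :
    (∀ u : EuclideanSpace ℝ (Fin n),
      ∃! b : ℝ, 0 < b ∧ ∑ s, Real.exp (-(b * F s) + ⟪u, c s⟫_ℝ) = 1) ∧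
    ∀ B : EuclideanSpace ℝ (Fin n) → ℝ,
      (∀ u, 0 < B u ∧ ∑ s, Real.exp (-(B u * F s) + ⟪u, c s⟫_ℝ) = 1) → Continuous B := by
  classical
  have hne : Nonempty Y := Fintype.card_pos_iff.mp (by omega)
  set g : EuclideanSpace ℝ (Fin n) → ℝ → ℝ :=
    fun u b => ∑ s, Real.exp (-(b * F s) + ⟪u, c s⟫_ℝ) with hg
  -- strict antitonicity in b
  have hanti : ∀ u, StrictAnti (g u) := by
    intro u b1 b2 hb
    apply Finset.sum_lt_sum_of_nonempty (Finset.univ_nonempty)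
    intro s _
    apply Real.exp_lt_exp.mpr
    have := hF s
    nlinarith
  -- continuity of g u in b
  have hcontb : ∀ u, Continuous (g u) := by
    intro u
    apply continuous_finset_sum
    intro s _
    exact Real.continuous_exp.comp (((continuous_id.mul continuous_const).neg).add
      continuous_const)
  -- continuity of g · t in u
  have hcontu : ∀ t : ℝ, Continuous (fun u => g u t) := by
    intro t
    apply continuous_finset_sum
    intro s _
    exact Real.continuous_exp.comp (continuous_const.add
      (continuous_id.inner continuous_const))
  -- g u 0 > 1
  have hg0 : ∀ u, 1 < g u 0 := by
    intro u
    obtain ⟨s₀, hs₀⟩ : ∃ s₀, 0 ≤ ⟪u, c s₀⟫_ℝ := by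
      by_cases hu : u = 0
      · exact ⟨Classical.arbitrary Y, by simp [hu]⟩
      · exact hc u hu
    have hsplit := Finset.add_sum_erase Finset.univ
      (fun s => Real.exp (-(0 * F s) + ⟪u, c s⟫_ℝ)) (Finset.mem_univ s₀)
    have h1 : (1:ℝ) ≤ Real.exp (-(0 * F s₀) + ⟪u, c s₀⟫_ℝ) := by
      rw [show -(0 * F s₀) + ⟪u, c s₀⟫_ℝ = ⟪u, c s₀⟫_ℝ by ring]
      exact Real.one_le_exp hs₀
    have h2 : 0 < ∑ s ∈ Finset.univ.erase s₀,
        Real.exp (-(0 * F s) + ⟪u, c s⟫_ℝ) := by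
      apply Finset.sum_pos
      · intro s _; exact Real.exp_pos _
      · rw [← Finset.card_pos, Finset.card_erase_of_mem (Finset.mem_univ s₀)]
        have : Finset.univ.card = Fintype.card Y := rfl
        omega
    have : g u 0 = Real.exp (-(0 * F s₀) + ⟪u, c s₀⟫_ℝ) +
        ∑ s ∈ Finset.univ.erase s₀, Real.exp (-(0 * F s) + ⟪u, c s⟫_ℝ) := by
      rw [hg]; exact hsplit.symm
    linarith
  -- tendsto 0 at top
  have htend : ∀ u, Tendsto (g u) atTop (nhds 0) := by
    intro u
    have : Tendsto (fun b => ∑ s, Real.exp (-(b * F s) + ⟪u, c s⟫_ℝ)) atTop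
        (nhds (∑ s : Y, (0:ℝ))) := by
      apply tendsto_finset_sum
      intro s _
      apply Real.tendsto_exp_atBot.comp
      apply Filter.tendsto_atBot_add_const_right
      exact tendsto_neg_atTop_atBot.comp (Tendsto.atTop_mul_const (hF s) tendsto_id)
    simpa using this
  -- existence and uniqueness
  have hmain : ∀ u : EuclideanSpace ℝ (Fin n),
      ∃! b : ℝ, 0 < b ∧ g u b = 1 := by
    intro u
    obtain ⟨M, hM0, hM⟩ : ∃ M, 0 < M ∧ g u M < 1 := by
      have h1 := (htend u).eventually (eventually_lt_nhds one_pos)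
      have h2 := eventually_gt_atTop (0:ℝ)
      obtain ⟨M, hM1, hM2⟩ := (h2.and h1).exists
      exact ⟨M, hM1, hM2⟩
    have hsub := intermediate_value_Icc' hM0.le ((hcontb u).continuousOn
      (s := Set.Icc 0 M))
    have h1mem : (1:ℝ) ∈ Set.Icc (g u M) (g u 0) := ⟨hM.le, (hg0 u).le⟩
    obtain ⟨b, hbmem, hbeq⟩ := hsub h1mem
    have hbpos : 0 < b := by
      rcases lt_or_eq_of_le hbmem.1 with h | h
      · exact h
      · exfalso; rw [← h] at hbeq; linarith [hg0 u]
    refine ⟨b, ⟨hbpos, hbeq⟩, ?_⟩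
    rintro b' ⟨_, hb'⟩
    exact (hanti u).injective (by rw [hb', hbeq])
  refine ⟨hmain, ?_⟩
  -- continuity
  intro B hB
  rw [continuous_iff_continuousAt]
  intro u₀
  have hb₀ := hB u₀
  rw [ContinuousAt, tendsto_order]
  constructor
  · intro a ha
    have heq : g u₀ (B u₀) = 1 := hb₀.2
    have h1 : 1 < g u₀ a := by
      have := hanti u₀ ha
      linarith
    have hev : ∀ᶠ u in nhds u₀, 1 < g u a :=
      ((hcontu a).continuousAt (x := u₀)).eventually_const_lt h1
    filter_upwards [hev] with u hu
    by_contra hle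
    push_neg at hle
    have h2 : g u a ≤ g u (B u) := (hanti u).antitone hle
    have h3 : g u (B u) = 1 := (hB u).2
    linarith
  · intro a ha
    have heq : g u₀ (B u₀) = 1 := hb₀.2
    have h1 : g u₀ a < 1 := by
      have := hanti u₀ ha
      linarith
    have hev : ∀ᶠ u in nhds u₀, g u a < 1 :=
      ((hcontu a).continuousAt (x := u₀)).eventually_lt_const h1
    filter_upwards [hev] with u hu
    by_contra hle
    push_neg at hle
    have h2 : g u (B u) ≤ g u a := (hanti u).antitone hle
    have h3 : g u (B u) = 1 := (hB u).2
    linarith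
end

section
/- Under the hypotheses guaranteeing the existence of the continuous function β : ℝⁿ → (0,∞) with ∑_{s∈Y} exp(−β(u)F(s) + u·c(s)) = 1, and assuming for every unit vector v there is s ∈ Y with v·c(s) > 0: for any sequence (u_m) in ℝⁿ, β(u_m) → ∞ if and only if ‖u_m‖ → ∞. -/
open Real Filter
open scoped InnerProductSpace BigOperators

theorem stmt3 (n : ℕ) (hn : 0 < n) (Y : Type*) [Fintype Y] (hY : 2 ≤ Fintype.card Y)
    (F : Y → ℝ) (hF : ∀ s, 0 < F s) (c : Y → EuclideanSpace ℝ (Fin n))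
    (hc : ∀ v : EuclideanSpace ℝ (Fin n), ‖v‖ = 1 → ∃ s, 0 < ⟪v, c s⟫_ℝ)
    (B : EuclideanSpace ℝ (Fin n) → ℝ)
    (hB : ∀ u, 0 < B u ∧ ∑ s, Real.exp (-(B u * F s) + ⟪u, c s⟫_ℝ) = 1) :
    ∀ u : ℕ → EuclideanSpace ℝ (Fin n),
      Filter.Tendsto (fun m => B (u m)) Filter.atTop Filter.atTop ↔
      Filter.Tendsto (fun m => ‖u m‖) Filter.atTop Filter.atTop := by
  have hYne : Nonempty Y := Fintype.card_pos_iff.mp (by omega)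
  have hne : (Finset.univ : Finset Y).Nonempty := Finset.univ_nonempty
  -- constants
  set Fmax : ℝ := Finset.univ.sup' hne F with hFmaxdef
  set Fmin : ℝ := Finset.univ.inf' hne F with hFmindef
  have hFmax : ∀ s, F s ≤ Fmax := fun s => Finset.le_sup' F (Finset.mem_univ s)
  have hFmin : ∀ s, Fmin ≤ F s := fun s => Finset.inf'_le F (Finset.mem_univ s)
  have hFmaxpos : 0 < Fmax := lt_of_lt_of_le (hF hYne.some) (hFmax hYne.some)
  have hFminpos : 0 < Fmin := by
    obtain ⟨s, _, hs⟩ := Finset.exists_mem_eq_inf' hne F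
    rw [hFmindef, hs]; exact hF s
  set Cmax : ℝ := max (Finset.univ.sup' hne (fun s => ‖c s‖)) 1 with hCdef
  have hCpos : (0:ℝ) < Cmax := lt_of_lt_of_le one_pos (le_max_right _ _)
  have hCle : ∀ s, ‖c s‖ ≤ Cmax := fun s =>
    le_trans (Finset.le_sup' (fun s => ‖c s‖) (Finset.mem_univ s)) (le_max_left _ _)
  set L : ℝ := Real.log (Fintype.card Y) with hLdef
  -- key 1 : each term ≤ 1
  have key1 : ∀ (w : EuclideanSpace ℝ (Fin n)) (s : Y), ⟪w, c s⟫_ℝ ≤ B w * F s := by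
    intro w s
    have h := (hB w).2
    have hle : Real.exp (-(B w * F s) + ⟪w, c s⟫_ℝ) ≤ 1 := by
      rw [← h]
      exact Finset.single_le_sum (f := fun s => Real.exp (-(B w * F s) + ⟪w, c s⟫_ℝ))
        (fun i _ => (Real.exp_pos _).le) (Finset.mem_univ s)
    have := Real.exp_le_one_iff.mp hle
    linarith
  -- key 2 : some term ≥ 1/card
  have key2 : ∀ (w : EuclideanSpace ℝ (Fin n)), ∃ s, B w * F s ≤ ⟪w, c s⟫_ℝ + L := by
    intro w
    have h := (hB w).2
    have hcard : (0:ℝ) < Fintype.card Y := by positivity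
    obtain ⟨s, _, hs⟩ : ∃ s ∈ Finset.univ, (1 : ℝ)/Fintype.card Y ≤
        Real.exp (-(B w * F s) + ⟪w, c s⟫_ℝ) := by
      by_contra hcon
      push_neg at hcon
      have hlt : ∑ s, Real.exp (-(B w * F s) + ⟪w, c s⟫_ℝ) <
          ∑ _s : Y, (1:ℝ)/Fintype.card Y :=
        Finset.sum_lt_sum_of_nonempty hne (fun i hi => hcon i hi)
      rw [h, Finset.sum_const, Finset.card_univ, nsmul_eq_mul,
        mul_one_div, div_self (ne_of_gt hcard)] at hlt
      exact absurd hlt (lt_irrefl 1)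
    have hlog := Real.log_le_log (by positivity) hs
    rw [Real.log_exp, Real.log_div one_ne_zero (ne_of_gt hcard), Real.log_one] at hlog
    refine ⟨s, by simp only [hLdef]; linarith⟩
  -- uniform δ on the sphere
  have hsph : (Metric.sphere (0 : EuclideanSpace ℝ (Fin n)) 1).Nonempty := by
    refine ⟨EuclideanSpace.single ⟨0, hn⟩ 1, ?_⟩
    simp only [mem_sphere_iff_norm, sub_zero, EuclideanSpace.norm_single, norm_one]
  have hcomp : IsCompact (Metric.sphere (0 : EuclideanSpace ℝ (Fin n)) 1) := isCompact_sphere 0 1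
  have hcont : Continuous fun v : EuclideanSpace ℝ (Fin n) => Finset.univ.sup' hne (fun s => ⟪v, c s⟫_ℝ) := by
    apply Continuous.finset_sup'_apply hne
    intro s _
    exact continuous_id.inner continuous_const
  obtain ⟨v0, hv0, hmin'⟩ := hcomp.exists_isMinOn hsph hcont.continuousOn
  have hmin : ∀ v ∈ Metric.sphere (0 : EuclideanSpace ℝ (Fin n)) 1,
      Finset.univ.sup' hne (fun s => ⟪v0, c s⟫_ℝ) ≤ Finset.univ.sup' hne (fun s => ⟪v, c s⟫_ℝ) :=
    fun v hv => hmin' hv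
  set δ : ℝ := Finset.univ.sup' hne (fun s => ⟪v0, c s⟫_ℝ) with hδdef
  have hv0norm : ‖v0‖ = 1 := by simpa using hv0
  have hδpos : 0 < δ := by
    obtain ⟨s, hs⟩ := hc v0 hv0norm
    exact lt_of_lt_of_le hs (Finset.le_sup' (fun s => ⟪v0, c s⟫_ℝ) (Finset.mem_univ s))
  -- lower bound : δ/Fmax * ‖w‖ ≤ B w
  have lower : ∀ w : EuclideanSpace ℝ (Fin n), δ/Fmax * ‖w‖ ≤ B w := by
    intro w
    rcases eq_or_ne w 0 with rfl | hw
    · simpa using (hB 0).1.le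
    · have hwpos : (0:ℝ) < ‖w‖ := norm_pos_iff.mpr hw
      set v : EuclideanSpace ℝ (Fin n) := ‖w‖⁻¹ • w with hvdef
      have hvmem : v ∈ Metric.sphere (0 : EuclideanSpace ℝ (Fin n)) 1 := by
        simp [hvdef, norm_smul, abs_of_pos (inv_pos.mpr hwpos),
          inv_mul_cancel₀ (ne_of_gt hwpos)]
      have hδle : δ ≤ Finset.univ.sup' hne (fun s => ⟪v, c s⟫_ℝ) := hmin v hvmem
      obtain ⟨s, _, hs⟩ := Finset.exists_mem_eq_sup' hne (fun s => ⟪v, c s⟫_ℝ)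
      rw [hs] at hδle
      have hinner : ⟪v, c s⟫_ℝ = ‖w‖⁻¹ * ⟪w, c s⟫_ℝ := real_inner_smul_left w (c s) _
      have h1 : δ * ‖w‖ ≤ ⟪w, c s⟫_ℝ := by
        rw [hinner] at hδle
        calc δ * ‖w‖ ≤ (‖w‖⁻¹ * ⟪w, c s⟫_ℝ) * ‖w‖ := by
              exact mul_le_mul_of_nonneg_right hδle hwpos.le
          _ = ⟪w, c s⟫_ℝ := by field_simp
      have h2 : ⟪w, c s⟫_ℝ ≤ B w * F s := key1 w s
      have h3 : B w * F s ≤ B w * Fmax := mul_le_mul_of_nonneg_left (hFmax s) (hB w).1.le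
      rw [div_mul_eq_mul_div, div_le_iff₀ hFmaxpos]
      calc δ * ‖w‖ ≤ B w * F s := le_trans h1 h2
        _ ≤ B w * Fmax := h3
  -- upper bound : B w ≤ (Cmax * ‖w‖ + L)/Fmin, stated as norm lower bound
  have upper : ∀ w : EuclideanSpace ℝ (Fin n), (Fmin * B w - L)/Cmax ≤ ‖w‖ := by
    intro w
    obtain ⟨s, hs⟩ := key2 w
    have h1 : ⟪w, c s⟫_ℝ ≤ ‖w‖ * ‖c s‖ := real_inner_le_norm w (c s)
    have h2 : ‖w‖ * ‖c s‖ ≤ ‖w‖ * Cmax := mul_le_mul_of_nonneg_left (hCle s) (norm_nonneg w)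
    have h3 : Fmin * B w ≤ B w * F s := by
      rw [mul_comm]; exact mul_le_mul_of_nonneg_left (hFmin s) (hB w).1.le
    rw [div_le_iff₀ hCpos]
    nlinarith
  intro u
  constructor
  · -- B → ∞ ⇒ ‖u‖ → ∞
    intro hBt
    have haux : Tendsto (fun m => (Fmin * B (u m) - L)/Cmax) atTop atTop := by
      apply Tendsto.atTop_div_const hCpos
      apply tendsto_atTop_add_const_right
      exact hBt.const_mul_atTop hFminpos
    exact tendsto_atTop_mono (fun m => upper (u m)) haux
  · -- ‖u‖ → ∞ ⇒ B → ∞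
    intro hNt
    have haux : Tendsto (fun m => δ/Fmax * ‖u m‖) atTop atTop :=
      hNt.const_mul_atTop (by positivity)
    exact tendsto_atTop_mono (fun m => lower (u m)) haux
end

section
/- Let Y be a finite set, F : Y → ℝ strictly positive, c : Y → ℝⁿ with the property that for every unit vector v there is s ∈ Y with v·c(s) > 0, and for β ∈ ℝ let u(β) be the unique minimizer of u ↦ ∑_{s∈Y} exp(u·c(s) − βF(s)). Then the map β ↦ u(β) is continuous. -/
open Real Filter
open scoped InnerProductSpace BigOperators
open scoped Topology

set_option maxHeartbeats 1000000 in
theorem stmt4 (n : ℕ) (hn : 0 < n) (Y : Type*) [Fintype Y] (hY : 2 ≤ Fintype.card Y)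
    (F : Y → ℝ) (hF : ∀ s, 0 < F s) (c : Y → EuclideanSpace ℝ (Fin n))
    (hc : ∀ v : EuclideanSpace ℝ (Fin n), ‖v‖ = 1 → ∃ s, 0 < ⟪v, c s⟫_ℝ)
    (U : ℝ → EuclideanSpace ℝ (Fin n))
    (hU : ∀ β : ℝ, ∀ u, u ≠ U β →
      ∑ s, Real.exp (⟪U β, c s⟫_ℝ - β * F s) < ∑ s, Real.exp (⟪u, c s⟫_ℝ - β * F s)) :
    Continuous U := by
  haveI : Nonempty Y := Fintype.card_pos_iff.mp (by omega)
  set f : ℝ → EuclideanSpace ℝ (Fin n) → ℝ :=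
    fun β u => ∑ s, Real.exp (⟪u, c s⟫_ℝ - β * F s) with hf
  have fle : ∀ β u, f β (U β) ≤ f β u := by
    intro β u
    rcases eq_or_ne u (U β) with rfl | h
    · exact le_rfl
    · exact (hU β u h).le
  have hfc : Continuous (fun p : ℝ × EuclideanSpace ℝ (Fin n) => f p.1 p.2) := by
    apply continuous_finset_sum
    intro s _
    exact Real.continuous_exp.comp
      ((continuous_snd.inner continuous_const).sub (continuous_fst.mul continuous_const))
  have hne : (Finset.univ : Finset Y).Nonempty := Finset.univ_nonempty
  -- uniform coercivity constant
  obtain ⟨ε, hε, hA⟩ : ∃ ε > 0, ∀ u : EuclideanSpace ℝ (Fin n), ∃ s, ε * ‖u‖ ≤ ⟪u, c s⟫_ℝ := by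
    set g : EuclideanSpace ℝ (Fin n) → ℝ :=
      fun v => Finset.univ.sup' hne (fun s => ⟪v, c s⟫_ℝ) with hg
    have hgc : Continuous g := by
      rw [continuous_iff_continuousAt]
      intro v
      exact Tendsto.finset_sup'_nhds_apply hne
        (fun s _ => ((continuous_id.inner (continuous_const (y := c s))).tendsto v))
    have hsph : IsCompact (Metric.sphere (0 : EuclideanSpace ℝ (Fin n)) 1) := isCompact_sphere 0 1
    have hsne : (Metric.sphere (0 : EuclideanSpace ℝ (Fin n)) 1).Nonempty := by
      refine ⟨EuclideanSpace.single ⟨0, hn⟩ (1:ℝ), ?_⟩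
      simp [mem_sphere_zero_iff_norm, EuclideanSpace.norm_single]
    obtain ⟨v₀, hv₀, hmin⟩ := hsph.exists_isMinOn hsne hgc.continuousOn
    have hv₀n : ‖v₀‖ = 1 := by simpa using hv₀
    obtain ⟨s₀, hs₀⟩ := hc v₀ hv₀n
    refine ⟨g v₀, lt_of_lt_of_le hs₀ (Finset.le_sup' (f := fun s => ⟪v₀, c s⟫_ℝ) (Finset.mem_univ s₀)), ?_⟩
    intro u
    rcases eq_or_ne u 0 with rfl | hu
    · exact ⟨s₀, by simp⟩
    · have hv : ‖(‖u‖⁻¹ • u : EuclideanSpace ℝ (Fin n))‖ = 1 := norm_smul_inv_norm hu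
      obtain ⟨s, -, hs⟩ := Finset.exists_mem_eq_sup' hne
        (fun s => ⟪(‖u‖⁻¹ • u : EuclideanSpace ℝ (Fin n)), c s⟫_ℝ)
      refine ⟨s, ?_⟩
      have h1 : g v₀ ≤ ⟪(‖u‖⁻¹ • u : EuclideanSpace ℝ (Fin n)), c s⟫_ℝ :=
        hs ▸ isMinOn_iff.mp hmin _ (by simp [mem_sphere_zero_iff_norm, hv])
      have h2 : ⟪(‖u‖⁻¹ • u : EuclideanSpace ℝ (Fin n)), c s⟫_ℝ = ‖u‖⁻¹ * ⟪u, c s⟫_ℝ :=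
        real_inner_smul_left _ _ _
      have hun : (0:ℝ) < ‖u‖ := norm_pos_iff.mpr hu
      rw [h2] at h1
      have h3 := mul_le_mul_of_nonneg_right h1 hun.le
      calc g v₀ * ‖u‖ ≤ (‖u‖⁻¹ * ⟪u, c s⟫_ℝ) * ‖u‖ := h3
        _ = ⟪u, c s⟫_ℝ := by field_simp
  -- local boundedness of U
  have hB : ∀ β₀ : ℝ, ∃ R : ℝ, ∀ β, |β - β₀| ≤ 1 → ‖U β‖ ≤ R := by
    intro β₀
    set B := |β₀| + 1 with hBdef
    have hB0 : 0 ≤ B := by positivity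
    set C := ∑ t, Real.exp (B * F t) with hC
    have hC0 : 0 < C := Finset.sum_pos (fun t _ => Real.exp_pos _) hne
    refine ⟨(Real.log C + B * ∑ t, F t) / ε, ?_⟩
    intro β hβ
    have hβB : |β| ≤ B := by
      have h := abs_sub_abs_le_abs_sub β β₀
      simp only [hBdef]; linarith
    have hfle0 : f β (U β) ≤ C := by
      refine (fle β 0).trans ?_
      refine Finset.sum_le_sum fun t _ => Real.exp_le_exp.mpr ?_
      have h1 : ⟪(0 : EuclideanSpace ℝ (Fin n)), c t⟫_ℝ = 0 := inner_zero_left _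
      have h2 : -(β * F t) ≤ B * F t := by
        have hb : -β ≤ |β| := neg_le_abs β
        nlinarith [(hF t).le]
      rw [h1]; linarith
    obtain ⟨s, hs⟩ := hA (U β)
    have hterm : Real.exp (⟪U β, c s⟫_ℝ - β * F s) ≤ C :=
      le_trans (Finset.single_le_sum (f := fun t => Real.exp (⟪U β, c t⟫_ℝ - β * F t))
        (fun t _ => (Real.exp_pos _).le) (Finset.mem_univ s)) hfle0
    have hlog : ⟪U β, c s⟫_ℝ - β * F s ≤ Real.log C := (Real.le_log_iff_exp_le hC0).mpr hterm
    have hFs : F s ≤ ∑ t, F t := Finset.single_le_sum (fun t _ => (hF t).le) (Finset.mem_univ s)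
    have hb1 : β * F s ≤ B * F s := by nlinarith [le_abs_self β, (hF s).le]
    have hb2 : B * F s ≤ B * ∑ t, F t := mul_le_mul_of_nonneg_left hFs hB0
    have hεu : ε * ‖U β‖ ≤ Real.log C + B * ∑ t, F t := by linarith
    rw [le_div_iff₀ hε]
    linarith [hεu]
  -- continuity
  rw [continuous_iff_continuousAt]
  intro β₀
  obtain ⟨R, hR⟩ := hB β₀
  have hRc : IsCompact (Metric.closedBall (0 : EuclideanSpace ℝ (Fin n)) R) :=
    isCompact_closedBall 0 R
  refine tendsto_of_subseq_tendsto ?_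
  intro xs hxs
  have hev : ∀ᶠ m in atTop, U (xs m) ∈ Metric.closedBall (0 : EuclideanSpace ℝ (Fin n)) R := by
    have h1 : ∀ᶠ m in atTop, xs m ∈ Metric.closedBall β₀ 1 :=
      hxs.eventually_mem (Metric.closedBall_mem_nhds β₀ one_pos)
    filter_upwards [h1] with m hm
    rw [Metric.mem_closedBall] at hm ⊢
    rw [Real.dist_eq] at hm
    rw [dist_zero_right]
    exact hR _ hm
  obtain ⟨a, -, φ, hφ, hφt⟩ := hRc.tendsto_subseq' hev.frequently
  have hxsφ : Tendsto (fun k => xs (φ k)) atTop (𝓝 β₀) := hxs.comp hφ.tendsto_atTop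
  have hφt' : Tendsto (fun k => U (xs (φ k))) atTop (𝓝 a) := hφt
  have hpair : Tendsto (fun k => ((xs (φ k), U (xs (φ k))) : ℝ × EuclideanSpace ℝ (Fin n)))
      atTop (𝓝 (β₀, a)) := hxsφ.prodMk_nhds hφt'
  have hlim : Tendsto (fun k => f (xs (φ k)) (U (xs (φ k)))) atTop (𝓝 (f β₀ a)) := by
    have h := (hfc.tendsto (β₀, a)).comp hpair
    simpa only [Function.comp_def] using h
  have key : ∀ u, f β₀ a ≤ f β₀ u := by
    intro u
    have hpair2 : Tendsto (fun k => ((xs (φ k), u) : ℝ × EuclideanSpace ℝ (Fin n)))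
        atTop (𝓝 (β₀, u)) := hxsφ.prodMk_nhds tendsto_const_nhds
    have hlim2 : Tendsto (fun k => f (xs (φ k)) u) atTop (𝓝 (f β₀ u)) := by
      have h := (hfc.tendsto (β₀, u)).comp hpair2
      simpa only [Function.comp_def] using h
    exact le_of_tendsto_of_tendsto' hlim hlim2 (fun k => fle _ _)
  have ha : a = U β₀ := by
    by_contra h
    exact absurd (key (U β₀)) (not_le.mpr (hU β₀ a h))
  exact ⟨φ, ha ▸ hφt⟩
end

section
/- Let Y be a finite set, F : Y → ℝ strictly positive, c : Y → ℝⁿ with the property that for every unit vector v there is s ∈ Y with v·c(s) > 0, and let u(β) denote the unique minimizer of u ↦ ∑_{s∈Y} exp(u·c(s) − βF(s)). Define g(β) = ∑_{s∈Y} exp(−βF(s) + u(β)·c(s)). Then there exists β₀ > 0 such that g(β) > 1 for β < β₀, g(β₀) = 1, and g(β) < 1 for β > β₀. -/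
open Real Filter
open scoped InnerProductSpace BigOperators

set_option maxHeartbeats 1000000 in
theorem stmt5 (n : ℕ) (hn : 0 < n) (Y : Type*) [Fintype Y] (hY : 2 ≤ Fintype.card Y)
    (F : Y → ℝ) (hF : ∀ s, 0 < F s) (c : Y → EuclideanSpace ℝ (Fin n))
    (hc : ∀ v : EuclideanSpace ℝ (Fin n), ‖v‖ = 1 → ∃ s, 0 < ⟪v, c s⟫_ℝ)
    (U : ℝ → EuclideanSpace ℝ (Fin n))
    (hU : ∀ β : ℝ, ∀ u, u ≠ U β →
      ∑ s, Real.exp (⟪U β, c s⟫_ℝ - β * F s) < ∑ s, Real.exp (⟪u, c s⟫_ℝ - β * F s)) :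
    ∃ β₀ : ℝ, 0 < β₀ ∧
      (∑ s, Real.exp (-(β₀ * F s) + ⟪U β₀, c s⟫_ℝ) = 1) ∧
      (∀ β : ℝ, β < β₀ → 1 < ∑ s, Real.exp (-(β * F s) + ⟪U β, c s⟫_ℝ)) ∧
      (∀ β : ℝ, β₀ < β → ∑ s, Real.exp (-(β * F s) + ⟪U β, c s⟫_ℝ) < 1) := by
  have hne : Nonempty Y := Fintype.card_pos_iff.mp (by omega)
  have hune : (Finset.univ : Finset Y).Nonempty := Finset.univ_nonempty
  set g : ℝ → ℝ := fun β => ∑ s, Real.exp (⟪U β, c s⟫_ℝ - β * F s) with hgdef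
  have hg : ∀ β, ∑ s, Real.exp (-(β * F s) + ⟪U β, c s⟫_ℝ) = g β := by
    intro β
    exact Finset.sum_congr rfl fun s _ => by rw [neg_add_eq_sub]
  have hle : ∀ β (u : EuclideanSpace ℝ (Fin n)),
      g β ≤ ∑ s, Real.exp (⟪u, c s⟫_ℝ - β * F s) := by
    intro β u
    by_cases h : u = U β
    · subst h; exact le_of_eq rfl
    · exact (hU β u h).le
  have hanti : ∀ β β', β < β' → g β' < g β := by
    intro β β' h
    calc g β' ≤ ∑ s, Real.exp (⟪U β, c s⟫_ℝ - β' * F s) := hle β' (U β)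
      _ < ∑ s, Real.exp (⟪U β, c s⟫_ℝ - β * F s) :=
        Finset.sum_lt_sum_of_nonempty hune (fun s _ => by
          have := hF s
          exact Real.exp_lt_exp.2 (by nlinarith))
      _ = g β := rfl
  -- bound on F
  obtain ⟨M, hM⟩ : ∃ M, ∀ s, F s ≤ M :=
    ⟨Finset.univ.sup' hune F, fun s => Finset.le_sup' F (Finset.mem_univ s)⟩
  have hM0 : 0 ≤ M := le_trans (hF (Classical.arbitrary Y)).le (hM _)
  -- sandwich bound for continuity
  have sandwich : ∀ β β', g β' ≤ Real.exp (|β' - β| * M) * g β := by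
    intro β β'
    calc g β' ≤ ∑ s, Real.exp (⟪U β, c s⟫_ℝ - β' * F s) := hle β' (U β)
      _ ≤ ∑ s, Real.exp (|β' - β| * M) * Real.exp (⟪U β, c s⟫_ℝ - β * F s) := by
          apply Finset.sum_le_sum
          intro s _
          rw [← Real.exp_add]
          apply Real.exp_le_exp.2
          have h1 : β - β' ≤ |β' - β| := by
            rw [abs_sub_comm]; exact le_abs_self _
          have h2 : (β - β') * F s ≤ |β' - β| * M := by
            calc (β - β') * F s ≤ |β' - β| * F s :=
                  mul_le_mul_of_nonneg_right h1 (hF s).le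
              _ ≤ |β' - β| * M := mul_le_mul_of_nonneg_left (hM s) (abs_nonneg _)
          nlinarith
      _ = Real.exp (|β' - β| * M) * g β := by rw [← Finset.mul_sum]
  have hcont : Continuous g := by
    rw [continuous_iff_continuousAt]
    intro β
    have hc1 : Continuous fun β' : ℝ => Real.exp (-(|β' - β| * M)) * g β := by
      fun_prop
    have hc2 : Continuous fun β' : ℝ => Real.exp (|β' - β| * M) * g β := by
      fun_prop
    have h1 : Tendsto (fun β' : ℝ => Real.exp (-(|β' - β| * M)) * g β) (nhds β) (nhds (g β)) := by
      have := hc1.tendsto β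
      simpa using this
    have h2 : Tendsto (fun β' : ℝ => Real.exp (|β' - β| * M) * g β) (nhds β) (nhds (g β)) := by
      have := hc2.tendsto β
      simpa using this
    refine tendsto_of_tendsto_of_tendsto_of_le_of_le h1 h2 ?_ ?_
    · intro β'
      have hs := sandwich β' β
      rw [abs_sub_comm] at hs
      show Real.exp (-(|β' - β| * M)) * g β ≤ g β'
      rw [Real.exp_neg, inv_mul_le_iff₀ (Real.exp_pos _)]
      exact hs
    · intro β'
      exact sandwich β β'
  -- g 0 > 1
  have h0 : 1 < g 0 := by
    by_cases h0 : U 0 = 0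
    · have : g 0 = (Fintype.card Y : ℝ) := by
        simp [hgdef, h0, inner_zero_left]
      rw [this]
      exact_mod_cast lt_of_lt_of_le one_lt_two (by exact_mod_cast hY)
    · have hv : ‖(‖U 0‖⁻¹ • U 0 : EuclideanSpace ℝ (Fin n))‖ = 1 := norm_smul_inv_norm h0
      obtain ⟨s, hs⟩ := hc _ hv
      rw [real_inner_smul_left] at hs
      have hn0 : 0 < ‖U 0‖⁻¹ := inv_pos.2 (norm_pos_iff.2 h0)
      have hip : 0 < ⟪U 0, c s⟫_ℝ := by
        by_contra hcon
        push_neg at hcon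
        nlinarith
      have h1 : Real.exp (⟪U 0, c s⟫_ℝ - 0 * F s) ≤ g 0 := by
        rw [hgdef]
        show Real.exp (⟪U 0, c s⟫_ℝ - 0 * F s) ≤ ∑ t : Y, Real.exp (⟪U 0, c t⟫_ℝ - 0 * F t)
        exact Finset.single_le_sum (f := fun t => Real.exp (⟪U 0, c t⟫_ℝ - 0 * F t))
          (fun t _ => (Real.exp_pos _).le) (Finset.mem_univ s)
      have h2 : 1 < Real.exp (⟪U 0, c s⟫_ℝ - 0 * F s) := by
        rw [show (1:ℝ) = Real.exp 0 from (Real.exp_zero).symm]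
        apply Real.exp_lt_exp.2
        nlinarith
      linarith
  -- g B < 1 for suitable B
  set N : ℝ := (Fintype.card Y : ℝ) with hNdef
  have hN2 : (2:ℝ) ≤ N := by rw [hNdef]; exact_mod_cast hY
  set m : ℝ := Finset.univ.inf' hune F with hmdef
  have hm0 : 0 < m := by
    rw [hmdef, Finset.lt_inf'_iff]
    exact fun s _ => hF s
  have hmle : ∀ s, m ≤ F s := fun s => Finset.inf'_le F (Finset.mem_univ s)
  set B : ℝ := (Real.log N + 1) / m with hBdef
  have hlogN : 0 ≤ Real.log N := Real.log_nonneg (by linarith)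
  have hBpos : 0 < B := div_pos (by linarith) hm0
  have hBm : B * m = Real.log N + 1 := div_mul_cancel₀ _ hm0.ne'
  have hgB : g B < 1 := by
    have step1 : g B ≤ ∑ s : Y, Real.exp (-(B * F s)) := by
      have := hle B 0
      simpa [inner_zero_left, zero_sub] using this
    have step2 : (∑ s : Y, Real.exp (-(B * F s))) ≤ ∑ _s : Y, Real.exp (-(B * m)) := by
      apply Finset.sum_le_sum
      intro s _
      apply Real.exp_le_exp.2
      have : B * m ≤ B * F s := mul_le_mul_of_nonneg_left (hmle s) hBpos.le
      linarith
    have step3 : (∑ _s : Y, Real.exp (-(B * m))) = N * Real.exp (-(B * m)) := by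
      rw [Finset.sum_const, nsmul_eq_mul]
      rfl
    have hNpos : 0 < N := by linarith
    have step4 : N * Real.exp (-(B * m)) = (Real.exp 1)⁻¹ := by
      rw [hBm, Real.exp_neg, Real.exp_add, Real.exp_log hNpos]
      field_simp
    have step5 : (Real.exp 1)⁻¹ < 1 := by
      have h : 1 < Real.exp 1 := by
        have := Real.add_one_le_exp 1
        linarith
      rw [inv_lt_one_iff₀]
      right
      exact h
    calc g B ≤ ∑ s : Y, Real.exp (-(B * F s)) := step1
      _ ≤ ∑ _s : Y, Real.exp (-(B * m)) := step2
      _ = N * Real.exp (-(B * m)) := step3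
      _ = (Real.exp 1)⁻¹ := step4
      _ < 1 := step5
  -- IVT
  have hmem : (1:ℝ) ∈ g '' Set.Icc 0 B :=
    intermediate_value_Icc' hBpos.le hcont.continuousOn ⟨hgB.le, h0.le⟩
  obtain ⟨β₀, hβ₀mem, hgβ₀⟩ := hmem
  have hβ₀pos : 0 < β₀ := by
    rcases hβ₀mem.1.lt_or_eq with h | h
    · exact h
    · exfalso; rw [← h] at hgβ₀; linarith
  refine ⟨β₀, hβ₀pos, ?_, ?_, ?_⟩
  · rw [hg]; exact hgβ₀
  · intro β hβ
    rw [hg]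
    have := hanti β β₀ hβ
    linarith
  · intro β hβ
    rw [hg]
    have := hanti β₀ β hβ
    linarith
end

section
/- Let Y be a finite set, F : Y → ℝ, β ∈ ℝ, and suppose t, t' ∈ Δ_Y (probability vectors on Y) satisfy: there exist y, y' ∈ Y with t_y ≠ 0, t'_{y'} ≠ 0, and t_s^{1/F(s)} / t_y^{1/F(y)} = t'_s^{1/F(s)} / t'_{y'}^{1/F(y')} for all s ∈ Y, where F(s) > 0 for all s. Then t = t'. -/
open Real
open scoped BigOperators

theorem stmt6 (Y : Type*) [Fintype Y] (F : Y → ℝ) (hF : ∀ s, 0 < F s) (β : ℝ)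
    (t t' : Y → ℝ)
    (ht0 : ∀ s, 0 ≤ t s ∧ t s ≤ 1) (ht1 : ∑ s, t s = 1)
    (ht'0 : ∀ s, 0 ≤ t' s ∧ t' s ≤ 1) (ht'1 : ∑ s, t' s = 1)
    (y y' : Y) (hy : t y ≠ 0) (hy' : t' y' ≠ 0)
    (h : ∀ s, t s ^ (1 / F s) / t y ^ (1 / F y) = t' s ^ (1 / F s) / t' y' ^ (1 / F y')) :
    t = t' := by
  have hty : 0 < t y := lt_of_le_of_ne (ht0 y).1 (Ne.symm hy)
  have hty' : 0 < t' y' := lt_of_le_of_ne (ht'0 y').1 (Ne.symm hy')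
  have ha : 0 < t y ^ (1 / F y) := Real.rpow_pos_of_pos hty _
  have hb : 0 < t' y' ^ (1 / F y') := Real.rpow_pos_of_pos hty' _
  set r : ℝ := t y ^ (1 / F y) / t' y' ^ (1 / F y') with hrdef
  have hrpos : 0 < r := div_pos ha hb
  have key : ∀ s, t s = r ^ (F s) * t' s := by
    intro s
    have hFs : F s ≠ 0 := (hF s).ne'
    have e1 : t s ^ (1 / F s) = r * t' s ^ (1 / F s) := by
      have hs := h s
      rw [div_eq_div_iff ha.ne' hb.ne'] at hs
      field_simp [hrdef, hb.ne']
      rw [hrdef, div_mul_eq_mul_div, eq_div_iff hb.ne']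
      linear_combination hs
    have e2 : (t s ^ (1 / F s)) ^ (F s) = t s := by
      rw [← Real.rpow_mul (ht0 s).1, one_div_mul_cancel hFs, Real.rpow_one]
    have e3 : (t' s ^ (1 / F s)) ^ (F s) = t' s := by
      rw [← Real.rpow_mul (ht'0 s).1, one_div_mul_cancel hFs, Real.rpow_one]
    calc t s = (t s ^ (1 / F s)) ^ (F s) := e2.symm
      _ = (r * t' s ^ (1 / F s)) ^ (F s) := by rw [e1]
      _ = r ^ (F s) * (t' s ^ (1 / F s)) ^ (F s) :=
          Real.mul_rpow hrpos.le (Real.rpow_nonneg (ht'0 s).1 _)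
      _ = r ^ (F s) * t' s := by rw [e3]
  have hsum : ∑ s, r ^ (F s) * t' s = ∑ s, t' s := by
    rw [ht'1, ← ht1]
    exact (Finset.sum_congr rfl fun s _ => (key s).symm)
  have hr1 : r = 1 := by
    rcases lt_trichotomy r 1 with h1 | h1 | h1
    · exfalso
      have : ∑ s, r ^ (F s) * t' s < ∑ s, t' s := by
        apply Finset.sum_lt_sum
        · intro s _
          have : r ^ (F s) ≤ 1 := Real.rpow_le_one hrpos.le h1.le (hF s).le
          nlinarith [(ht'0 s).1]
        · exact ⟨y', Finset.mem_univ _, by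
            have : r ^ (F y') < 1 := Real.rpow_lt_one hrpos.le h1 (hF y')
            nlinarith⟩
      linarith [hsum]
    · exact h1
    · exfalso
      have : ∑ s, t' s < ∑ s, r ^ (F s) * t' s := by
        apply Finset.sum_lt_sum
        · intro s _
          have : 1 ≤ r ^ (F s) := Real.one_le_rpow h1.le (hF s).le
          nlinarith [(ht'0 s).1]
        · exact ⟨y', Finset.mem_univ _, by
            have : 1 < r ^ (F y') := Real.one_lt_rpow h1 (hF y')
            nlinarith⟩
      linarith [hsum]
  funext s
  rw [key s, hr1, Real.one_rpow, one_mul]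
end

section
/- Let Z ⊆ Y be nonempty, F : Y → ℝ strictly positive, and suppose t ∈ Δ_Y satisfies: t_s ≠ 0 if and only if s ∈ Z, and t_{s₁}^{1/F(s₁)} = t_{s₂}^{1/F(s₂)} for all s₁, s₂ ∈ Z. Then t is the unique element of Δ_Y with these two properties; in particular for any z ∈ Z, t_z is the unique positive solution of ∑_{s∈Z} x^{F(s)/F(z)} = 1. -/
open Real
open scoped BigOperators

private lemma key7 {Y : Type*} [Fintype Y] (F : Y → ℝ) (hF : ∀ s, 0 < F s)
    (Z : Finset Y) (t : Y → ℝ) (ht0 : ∀ s, 0 ≤ t s ∧ t s ≤ 1) (ht1 : ∑ s, t s = 1)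
    (h1 : ∀ s, t s ≠ 0 ↔ s ∈ Z)
    (h2 : ∀ s₁ ∈ Z, ∀ s₂ ∈ Z, t s₁ ^ (1 / F s₁) = t s₂ ^ (1 / F s₂)) :
    ∀ z ∈ Z, 0 < t z ∧ (∀ s ∈ Z, t s = t z ^ (F s / F z)) ∧
      ∑ s ∈ Z, t z ^ (F s / F z) = 1 := by
  intro z hz
  have htz : 0 < t z := lt_of_le_of_ne (ht0 z).1 (Ne.symm ((h1 z).2 hz))
  have hrep : ∀ s ∈ Z, t s = t z ^ (F s / F z) := by
    intro s hs
    have h := h2 s hs z hz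
    have : (t s ^ (1 / F s)) ^ (F s) = (t z ^ (1 / F z)) ^ (F s) := by rw [h]
    rw [← Real.rpow_mul (ht0 s).1, ← Real.rpow_mul (le_of_lt htz),
      one_div_mul_cancel (hF s).ne', Real.rpow_one] at this
    rw [this, show (1 / F z) * F s = F s / F z by ring]
  have hsum : ∑ s ∈ Z, t z ^ (F s / F z) = 1 := by
    rw [← ht1]
    rw [show (∑ s, t s) = ∑ s ∈ Z, t s from (Finset.sum_subset (Finset.subset_univ Z)
      (fun s _ hs => by by_contra h; exact hs ((h1 s).1 h))).symm]
    exact Finset.sum_congr rfl (fun s hs => (hrep s hs).symm)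
  exact ⟨htz, hrep, hsum⟩

private lemma mono7 {Y : Type*} (F : Y → ℝ) (hF : ∀ s, 0 < F s) (Z : Finset Y)
    (hZ : Z.Nonempty) (z : Y) {x y : ℝ} (hx : 0 < x) (hy : 0 < y)
    (hxy : ∑ s ∈ Z, x ^ (F s / F z) = ∑ s ∈ Z, y ^ (F s / F z)) : x = y := by
  rcases lt_trichotomy x y with h | h | h
  · exfalso
    have : ∑ s ∈ Z, x ^ (F s / F z) < ∑ s ∈ Z, y ^ (F s / F z) :=
      Finset.sum_lt_sum_of_nonempty hZ (fun s _ =>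
        Real.rpow_lt_rpow (le_of_lt hx) h (div_pos (hF s) (hF z)))
    exact absurd hxy this.ne
  · exact h
  · exfalso
    have : ∑ s ∈ Z, y ^ (F s / F z) < ∑ s ∈ Z, x ^ (F s / F z) :=
      Finset.sum_lt_sum_of_nonempty hZ (fun s _ =>
        Real.rpow_lt_rpow (le_of_lt hy) h (div_pos (hF s) (hF z)))
    exact absurd hxy.symm this.ne

theorem stmt7 (Y : Type*) [Fintype Y] [DecidableEq Y] (hY : 2 ≤ Fintype.card Y)
    (F : Y → ℝ) (hF : ∀ s, 0 < F s) (Z : Finset Y) (hZ : Z.Nonempty)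
    (t : Y → ℝ) (ht0 : ∀ s, 0 ≤ t s ∧ t s ≤ 1) (ht1 : ∑ s, t s = 1)
    (h1 : ∀ s, t s ≠ 0 ↔ s ∈ Z)
    (h2 : ∀ s₁ ∈ Z, ∀ s₂ ∈ Z, t s₁ ^ (1 / F s₁) = t s₂ ^ (1 / F s₂)) :
    (∀ t' : Y → ℝ, (∀ s, 0 ≤ t' s ∧ t' s ≤ 1) → (∑ s, t' s = 1) →
      (∀ s, t' s ≠ 0 ↔ s ∈ Z) →
      (∀ s₁ ∈ Z, ∀ s₂ ∈ Z, t' s₁ ^ (1 / F s₁) = t' s₂ ^ (1 / F s₂)) → t' = t) ∧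
    ∀ z ∈ Z, 0 < t z ∧ (∑ s ∈ Z, t z ^ (F s / F z) = 1) ∧
      ∀ x : ℝ, 0 < x → (∑ s ∈ Z, x ^ (F s / F z) = 1) → x = t z := by
  have K := key7 F hF Z t ht0 ht1 h1 h2
  constructor
  · intro t' ht0' ht1' h1' h2'
    obtain ⟨z, hz⟩ := hZ
    obtain ⟨htz, hrep, hsum⟩ := K z hz
    obtain ⟨htz', hrep', hsum'⟩ := key7 F hF Z t' ht0' ht1' h1' h2' z hz
    have hzz : t' z = t z :=
      mono7 F hF Z ⟨z, hz⟩ z htz' htz (hsum'.trans hsum.symm)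
    funext s
    by_cases hs : s ∈ Z
    · rw [hrep s hs, hrep' s hs, hzz]
    · have := (h1 s); have := (h1' s)
      rw [of_not_not (fun h => hs ((h1 s).1 h)), of_not_not (fun h => hs ((h1' s).1 h))]
  · intro z hz
    obtain ⟨htz, hrep, hsum⟩ := K z hz
    exact ⟨htz, hsum, fun x hx hxs => mono7 F hF Z hZ z hx htz (hxs.trans hsum.symm)⟩
end

section
/- Let M ⊆ ℝⁿ be a closed strongly convex cone (i.e. M ∩ (−M) = {0}), and fix v ∈ Int(M) ∩ S^{n−1} where Int is the relative interior and dim(M) ≥ 2. Then for every w ∈ (M ∩ S^{n−1}) \ {v} there exists a unique pair (λ, u) with λ ∈ (0,1] and u in the relative boundary of M intersected with S^{n−1} such that w = ((1−λ)v + λu)/‖(1−λ)v + λu‖. -/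
open Real
open scoped BigOperators

lemma mem_intrinsicInterior_iff'' {E : Type*} [NormedAddCommGroup E] [NormedSpace ℝ E]
    (M : Set E) (x : E) :
    x ∈ intrinsicInterior ℝ M ↔ x ∈ (affineSpan ℝ M : Set E) ∧
      ∃ ε > 0, ∀ z ∈ (affineSpan ℝ M : Set E), dist z x < ε → z ∈ M := by
  constructor
  · rintro ⟨y, hy, rfl⟩
    refine ⟨y.2, ?_⟩
    rw [mem_interior_iff_mem_nhds, Metric.mem_nhds_iff] at hy
    obtain ⟨ε, hε, hball⟩ := hy
    refine ⟨ε, hε, fun z hz hdist => ?_⟩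
    have : (⟨z, hz⟩ : affineSpan ℝ M) ∈ Metric.ball y ε := by
      simpa [Metric.mem_ball, Subtype.dist_eq] using hdist
    exact hball this
  · rintro ⟨hxA, ε, hε, hball⟩
    refine ⟨⟨x, hxA⟩, ?_, rfl⟩
    rw [mem_interior_iff_mem_nhds, Metric.mem_nhds_iff]
    exact ⟨ε, hε, fun z hz => hball z z.2 (by simpa [Subtype.dist_eq] using hz)⟩

set_option maxHeartbeats 1000000 in
theorem stmt8 (n : ℕ) (M : Set (EuclideanSpace ℝ (Fin n)))
    (hclosed : IsClosed M) (hconv : Convex ℝ M)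
    (hcone : ∀ x ∈ M, ∀ r : ℝ, 0 ≤ r → r • x ∈ M)
    (hstrong : M ∩ (-M) = {0})
    (hdim : 2 ≤ Module.finrank ℝ (Submodule.span ℝ M))
    (v : EuclideanSpace ℝ (Fin n)) (hv : v ∈ intrinsicInterior ℝ M) (hv1 : ‖v‖ = 1) :
    ∀ w ∈ M, ‖w‖ = 1 → w ≠ v →
      ∃! p : ℝ × EuclideanSpace ℝ (Fin n),
        p.1 ∈ Set.Ioc (0 : ℝ) 1 ∧ p.2 ∈ M \ intrinsicInterior ℝ M ∧ ‖p.2‖ = 1 ∧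
        w = ‖(1 - p.1) • v + p.1 • p.2‖⁻¹ • ((1 - p.1) • v + p.1 • p.2) := by
  intro w hw hw1 hwv
  have hMA : M ⊆ (affineSpan ℝ M : Set (EuclideanSpace ℝ (Fin n))) := subset_affineSpan ℝ M
  have hvM : v ∈ M := intrinsicInterior_subset hv
  have h0M : (0 : EuclideanSpace ℝ (Fin n)) ∈ M := by
    simpa using hcone v hvM 0 le_rfl
  have h0A : (0 : EuclideanSpace ℝ (Fin n)) ∈ affineSpan ℝ M := hMA h0M
  have hcomb : ∀ a b : EuclideanSpace ℝ (Fin n),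
      a ∈ (affineSpan ℝ M : Set (EuclideanSpace ℝ (Fin n))) →
      b ∈ (affineSpan ℝ M : Set (EuclideanSpace ℝ (Fin n))) →
      ∀ r t : ℝ, r • a + t • b ∈ (affineSpan ℝ M : Set (EuclideanSpace ℝ (Fin n))) := by
    intro a b ha hb r t
    have h1 := AffineSubspace.smul_vsub_vadd_mem (affineSpan ℝ M) t
      (p₁ := b) (p₂ := 0) (p₃ := 0) hb h0A h0A
    have h2 := AffineSubspace.smul_vsub_vadd_mem (affineSpan ℝ M) r
      (p₁ := a) (p₂ := 0) (p₃ := t • b) ha h0A (by simpa using h1)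
    simpa using h2
  have haddM : ∀ a ∈ M, ∀ b ∈ M, a + b ∈ M := by
    intro a ha b hb
    have h1 := hconv ha hb (by norm_num : (0:ℝ) ≤ 1/2) (by norm_num : (0:ℝ) ≤ 1/2)
      (by norm_num : (1:ℝ)/2 + 1/2 = 1)
    have h2 := hcone _ h1 2 (by norm_num)
    convert h2 using 1
    module
  set S : Set ℝ := {s : ℝ | 0 ≤ s ∧ w - s • v ∈ M} with hSdef
  have hS0 : (0:ℝ) ∈ S := ⟨le_rfl, by simpa using hw⟩
  have hSclosed : IsClosed S := by
    have h2 : IsClosed {s : ℝ | w - s • v ∈ M} :=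
      hclosed.preimage (continuous_const.sub (continuous_id.smul continuous_const))
    have := (isClosed_Ici (a := (0:ℝ))).inter h2
    simpa [hSdef, Set.setOf_and, Set.Ici] using this
  have hSbdd : BddAbove S := by
    by_contra hbdd
    have hvM' : -v ∈ M := by
      rw [← hclosed.closure_eq, Metric.mem_closure_iff]
      intro ε hε
      obtain ⟨s, hsS, hslt⟩ := not_bddAbove_iff.mp hbdd (max 1 (2/ε))
      have hs1 : (1:ℝ) < s := lt_of_le_of_lt (le_max_left _ _) hslt
      have hs2 : 2/ε < s := lt_of_le_of_lt (le_max_right _ _) hslt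
      have hs0 : (0:ℝ) < s := by linarith
      refine ⟨s⁻¹ • (w - s • v), hcone _ hsS.2 s⁻¹ (by positivity), ?_⟩
      have he : s⁻¹ • (w - s • v) = s⁻¹ • w - v := by
        rw [smul_sub, smul_smul, inv_mul_cancel₀ hs0.ne', one_smul]
      rw [he, dist_eq_norm]
      have h3 : -v - (s⁻¹ • w - v) = -(s⁻¹ • w) := by abel
      rw [h3, norm_neg, norm_smul, hw1, Real.norm_eq_abs, abs_of_pos (by positivity),
        mul_one, inv_lt_comm₀ hs0 hε]
      have : ε⁻¹ < 2/ε := by rw [inv_eq_one_div]; gcongr; norm_num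
      linarith
    have hv0 : v = (0 : EuclideanSpace ℝ (Fin n)) := by
      have : v ∈ M ∩ (-M) := ⟨hvM, by simpa [Set.mem_neg] using hvM'⟩
      rw [hstrong] at this
      simpa using this
    rw [hv0] at hv1
    simp at hv1
  set s₀ : ℝ := sSup S with hs₀def
  have hs₀S : s₀ ∈ S := hSclosed.csSup_mem ⟨0, hS0⟩ hSbdd
  have hs₀0 : 0 ≤ s₀ := hs₀S.1
  have hyM : w - s₀ • v ∈ M := hs₀S.2
  have hne : w - s₀ • v ≠ 0 := by
    intro h
    have hwe : w = s₀ • v := by rwa [sub_eq_zero] at h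
    have h1 : ‖w‖ = s₀ * ‖v‖ := by rw [hwe, norm_smul, Real.norm_eq_abs, abs_of_nonneg hs₀0]
    rw [hv1, hw1, mul_one] at h1
    exact hwv (by rw [hwe, ← h1, one_smul])
  set N : ℝ := ‖w - s₀ • v‖ with hNdef
  have hN : 0 < N := norm_pos_iff.mpr hne
  set u : EuclideanSpace ℝ (Fin n) := N⁻¹ • (w - s₀ • v) with hudef
  set lam : ℝ := N / (s₀ + N) with hlamdef
  have hsum : 0 < s₀ + N := by linarith
  have hlam0 : 0 < lam := div_pos hN hsum
  have hlam1 : lam ≤ 1 := by rw [hlamdef, div_le_one hsum]; linarith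
  have huM : u ∈ M := hcone _ hyM N⁻¹ (inv_nonneg.mpr hN.le)
  have hu1 : ‖u‖ = 1 := by
    rw [hudef, norm_smul, Real.norm_eq_abs, abs_of_pos (inv_pos.mpr hN), ← hNdef,
      inv_mul_cancel₀ hN.ne']
  have hubd : u ∉ intrinsicInterior ℝ M := by
    intro hmem
    rw [mem_intrinsicInterior_iff''] at hmem
    obtain ⟨huA, ε, hε, hball⟩ := hmem
    set δ : ℝ := (ε / 2) * N with hδdef
    have hδ0 : 0 < δ := mul_pos (half_pos hε) hN
    have hzM : u - (δ / N) • v ∈ M := by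
      apply hball
      · have := hcomb u v huA (hMA hvM) 1 (-(δ/N))
        simpa [sub_eq_add_neg, neg_smul] using this
      · rw [dist_eq_norm]
        have h3 : u - (δ/N) • v - u = -((δ/N) • v) := by abel
        rw [h3, norm_neg, norm_smul, hv1, mul_one, Real.norm_eq_abs,
          abs_of_pos (div_pos hδ0 hN), hδdef, mul_div_assoc, div_self hN.ne']
        linarith
    have hM2 : w - (s₀ + δ) • v ∈ M := by
      have h4 := hcone _ hzM N hN.le
      convert h4 using 1
      rw [hudef]
      match_scalars <;> field_simp <;> ring
    have hin : s₀ + δ ∈ S := ⟨by linarith, hM2⟩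
    have := le_csSup hSbdd hin
    linarith
  refine ⟨⟨lam, u⟩, ⟨⟨hlam0, hlam1⟩, ⟨huM, hubd⟩, hu1, ?_⟩, ?_⟩
  · show w = ‖(1 - lam) • v + lam • u‖⁻¹ • ((1 - lam) • v + lam • u)
    have hx₀ : (1 - lam) • v + lam • u = (s₀ + N)⁻¹ • w := by
      rw [hudef, hlamdef]
      match_scalars <;> field_simp [hsum.ne'] <;> ring
    rw [hx₀, norm_smul, hw1, mul_one, Real.norm_eq_abs, abs_of_pos (inv_pos.mpr hsum),
      inv_inv, smul_smul, mul_inv_cancel₀ hsum.ne', one_smul]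
  · rintro ⟨l, q⟩ ⟨⟨hl0, hl1⟩, ⟨hqM, hqbd⟩, hq1, hEq⟩
    simp only at hl0 hl1 hqM hqbd hq1 hEq ⊢
    obtain ⟨x, hxdef⟩ : ∃ y, y = (1 - l) • v + l • q := ⟨_, rfl⟩
    rw [← hxdef] at hEq
    have hx0 : x ≠ 0 := by
      intro h
      rw [h] at hEq
      simp only [norm_zero, smul_zero] at hEq
      rw [hEq] at hw1
      simp at hw1
    obtain ⟨c, hcdef⟩ : ∃ y : ℝ, y = ‖x‖ := ⟨_, rfl⟩
    have hc : (0:ℝ) < c := by rw [hcdef]; exact norm_pos_iff.mpr hx0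
    rw [← hcdef] at hEq
    have hcw : c • w = x := by
      rw [hEq, smul_smul, mul_inv_cancel₀ hc.ne', one_smul]
    obtain ⟨s, hsdef⟩ : ∃ y : ℝ, y = (1 - l) / c := ⟨_, rfl⟩
    have hs0 : 0 ≤ s := by rw [hsdef]; exact div_nonneg (by linarith) hc.le
    have hq : q = (c / l) • (w - s • v) := by
      have h1 : l • q = c • w - (1 - l) • v := by
        rw [hcw, hxdef]; abel
      have h2 : (c / l) • (w - s • v) = l⁻¹ • (c • w - (1-l) • v) := by
        rw [hsdef]
        match_scalars <;> field_simp [hc.ne', hl0.ne'] <;> ring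
      rw [h2, ← h1, smul_smul, inv_mul_cancel₀ hl0.ne', one_smul]
    have hsS : s ∈ S := by
      refine ⟨hs0, ?_⟩
      have h5 : w - s • v = (l / c) • q := by
        rw [hq, smul_smul, div_mul_div_comm, mul_comm l c,
          div_self (mul_pos hc hl0).ne', one_smul]
      rw [h5]
      exact hcone _ hqM _ (div_nonneg hl0.le hc.le)
    have hss : s ≤ s₀ := le_csSup hSbdd hsS
    have hseq : s = s₀ := by
      by_contra hne'
      have hlt : s < s₀ := lt_of_le_of_ne hss hne'
      apply hqbd
      rw [mem_intrinsicInterior_iff''] at hv ⊢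
      obtain ⟨hvA, ε, hε, hball⟩ := hv
      refine ⟨hMA hqM, ?_⟩
      obtain ⟨r, hrdef⟩ : ∃ y : ℝ, y = (c / l) * (s₀ - s) := ⟨_, rfl⟩
      have hr0 : 0 < r := by
        rw [hrdef]; exact mul_pos (div_pos hc hl0) (by linarith)
      obtain ⟨m, hmdef⟩ : ∃ y, y = (c / l) • (w - s₀ • v) := ⟨_, rfl⟩
      have hmM : m ∈ M := by rw [hmdef]; exact hcone _ hyM _ (div_nonneg hc.le hl0.le)
      have hqm : q = m + r • v := by
        rw [hq, hmdef, hrdef]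
        match_scalars <;> ring
      refine ⟨r * ε, mul_pos hr0 hε, fun z hzA hdist => ?_⟩
      obtain ⟨v', hv'def⟩ : ∃ y, y = r⁻¹ • (z - m) := ⟨_, rfl⟩
      have hv'A : v' ∈ (affineSpan ℝ M : Set (EuclideanSpace ℝ (Fin n))) := by
        have := hcomb z m hzA (hMA hmM) r⁻¹ (-r⁻¹)
        rw [hv'def]
        convert this using 1
        module
      have hv'M : v' ∈ M := by
        apply hball v' hv'A
        have key : ∀ a b : EuclideanSpace ℝ (Fin n), r⁻¹ • (a - r • b) = r⁻¹ • a - b := by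
          intro a b
          rw [smul_sub, smul_smul, inv_mul_cancel₀ hr0.ne', one_smul]
        have h6 : v' - v = r⁻¹ • (z - q) := by
          rw [hv'def, hqm]
          have h6' : z - (m + r • v) = (z - m) - r • v := by abel
          rw [h6', key]
        rw [dist_eq_norm, h6, norm_smul, Real.norm_eq_abs, abs_of_pos (inv_pos.mpr hr0),
          inv_mul_lt_iff₀ hr0]
        rw [dist_eq_norm] at hdist
        linarith
      have hzeq : z = m + r • v' := by
        rw [hv'def, smul_smul, mul_inv_cancel₀ hr0.ne', one_smul]
        abel
      rw [hzeq]
      exact haddM _ hmM _ (hcone _ hv'M r hr0.le)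
    have hcl : c / l * N = 1 := by
      rw [hq, hseq, norm_smul, Real.norm_eq_abs, abs_of_pos (div_pos hc hl0), ← hNdef] at hq1
      exact hq1
    have h9 : c / l = N⁻¹ := eq_inv_of_mul_eq_one_left hcl
    have h7 : c * N = l := by
      rw [div_eq_iff hl0.ne'] at h9
      rw [h9]
      field_simp
    have h8 : s₀ * c = 1 - l := by
      rw [← hseq, hsdef]
      field_simp
    have hlval : l = lam := by
      have h10 : l * s₀ = N * (1 - l) := by
        calc l * s₀ = (c * N) * s₀ := by rw [h7]
        _ = N * (s₀ * c) := by ring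
        _ = N * (1 - l) := by rw [h8]
      rw [hlamdef, eq_div_iff hsum.ne']
      nlinarith [h10]
    have huval : q = u := by
      rw [hq, hseq, hudef, h9]
    exact Prod.ext hlval huval
end

section
/- With notation as in the unique decomposition of points on a strongly convex cone: the maps w ↦ P(w) (the boundary point) and w ↦ λ_w are continuous from (M ∩ S^{n−1}) ∖ {v} to S^{n−1} and [0,1] respectively, where w = ((1−λ_w)v + λ_w P(w))/‖(1−λ_w)v + λ_w P(w)‖. -/
open Real
open scoped BigOperators

theorem stmt9 (n : ℕ) (M : Set (EuclideanSpace ℝ (Fin n)))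
    (hclosed : IsClosed M) (hconv : Convex ℝ M)
    (hcone : ∀ x ∈ M, ∀ r : ℝ, 0 ≤ r → r • x ∈ M)
    (hstrong : M ∩ (-M) = {0})
    (hdim : 2 ≤ Module.finrank ℝ (Submodule.span ℝ M))
    (v : EuclideanSpace ℝ (Fin n)) (hv : v ∈ intrinsicInterior ℝ M) (hv1 : ‖v‖ = 1)
    (P : EuclideanSpace ℝ (Fin n) → EuclideanSpace ℝ (Fin n))
    (lam : EuclideanSpace ℝ (Fin n) → ℝ)
    (hPlam : ∀ w ∈ (M ∩ Metric.sphere (0 : EuclideanSpace ℝ (Fin n)) 1) \ {v},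
      lam w ∈ Set.Ioc (0 : ℝ) 1 ∧ P w ∈ M \ intrinsicInterior ℝ M ∧ ‖P w‖ = 1 ∧
      w = ‖(1 - lam w) • v + lam w • P w‖⁻¹ • ((1 - lam w) • v + lam w • P w))
    (huniq : ∀ w ∈ (M ∩ Metric.sphere (0 : EuclideanSpace ℝ (Fin n)) 1) \ {v},
      ∀ (l : ℝ) (u : EuclideanSpace ℝ (Fin n)),
        l ∈ Set.Ioc (0 : ℝ) 1 → u ∈ M \ intrinsicInterior ℝ M → ‖u‖ = 1 →
        w = ‖(1 - l) • v + l • u‖⁻¹ • ((1 - l) • v + l • u) → l = lam w ∧ u = P w) :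
    ContinuousOn P ((M ∩ Metric.sphere (0 : EuclideanSpace ℝ (Fin n)) 1) \ {v}) ∧
    ContinuousOn lam ((M ∩ Metric.sphere (0 : EuclideanSpace ℝ (Fin n)) 1) \ {v}) := by
  classical
  set S : Set (EuclideanSpace ℝ (Fin n)) :=
    (M ∩ Metric.sphere (0 : EuclideanSpace ℝ (Fin n)) 1) \ {v} with hSdef
  have hvM : v ∈ M := intrinsicInterior_subset hv
  have hv0 : v ≠ 0 := fun h => by simp [h] at hv1
  -- M \ intrinsicInterior is closed
  have hMsub : M ⊆ (affineSpan ℝ M : Set (EuclideanSpace ℝ (Fin n))) := subset_affineSpan ℝ M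
  have hBclosed : IsClosed (M \ intrinsicInterior ℝ M) := by
    obtain ⟨U, hUopen, hU⟩ := isOpen_induced_iff.mp
      (isOpen_interior : IsOpen (interior ((↑) ⁻¹' M : Set (affineSpan ℝ M))))
    have himg : intrinsicInterior ℝ M
        = Subtype.val '' ((Subtype.val : affineSpan ℝ M → EuclideanSpace ℝ (Fin n)) ⁻¹' U) := by
      rw [intrinsicInterior, ← hU]
    have hEq : M \ intrinsicInterior ℝ M = M \ U := by
      ext x
      constructor
      · rintro ⟨hxM, hx⟩
        exact ⟨hxM, fun hxU => hx (by rw [himg]; exact ⟨⟨x, hMsub hxM⟩, hxU, rfl⟩)⟩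
      · rintro ⟨hxM, hx⟩
        refine ⟨hxM, fun hxI => hx ?_⟩
        rw [himg] at hxI
        obtain ⟨y, hy, rfl⟩ := hxI
        exact hy
    rw [hEq]
    exact hclosed.sdiff hUopen
  -- the compact set where (lam w, P w) lives
  set K : Set (EuclideanSpace ℝ (Fin n)) :=
    (M \ intrinsicInterior ℝ M) ∩ Metric.sphere (0 : EuclideanSpace ℝ (Fin n)) 1 with hKdef
  have hKcompact : IsCompact K :=
    IsCompact.of_isClosed_subset (isCompact_sphere (0 : EuclideanSpace ℝ (Fin n)) 1)
      (hBclosed.inter Metric.isClosed_sphere) Set.inter_subset_right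
  set C : Set (ℝ × EuclideanSpace ℝ (Fin n)) := Set.Icc (0 : ℝ) 1 ×ˢ K with hCdef
  have hCcompact : IsCompact C := isCompact_Icc.prod hKcompact
  -- the combination is never zero
  have hne : ∀ l : ℝ, l ∈ Set.Icc (0 : ℝ) 1 → ∀ u ∈ M, ‖u‖ = 1 →
      (1 - l) • v + l • u ≠ 0 := by
    intro l hl u huM hu1 h0
    have h1 : (1 - l) • v ∈ M := hcone v hvM _ (by linarith [hl.2])
    have h2 : (1 - l) • v ∈ -M := by
      rw [Set.mem_neg]
      have heq : -((1 - l) • v) = l • u := by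
        have h0' := h0
        rw [add_eq_zero_iff_eq_neg] at h0'
        rw [h0', neg_neg]
      rw [heq]
      exact hcone u huM l hl.1
    have h3 : (1 - l) • v = 0 := by
      have hmem : (1 - l) • v ∈ M ∩ (-M) := ⟨h1, h2⟩
      rwa [hstrong, Set.mem_singleton_iff] at hmem
    rcases smul_eq_zero.mp h3 with h | h
    · have hl1 : l = 1 := by linarith [sub_eq_zero.mp (by linarith : (1:ℝ) - l = 0)]
      rw [hl1, sub_self, zero_smul, zero_add, one_smul] at h0
      rw [h0] at hu1
      simp at hu1
    · exact hv0 h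
  -- the normalization map
  set g : ℝ × EuclideanSpace ℝ (Fin n) → EuclideanSpace ℝ (Fin n) :=
    fun p => (1 - p.1) • v + p.1 • p.2 with hgdef
  set F : ℝ × EuclideanSpace ℝ (Fin n) → EuclideanSpace ℝ (Fin n) :=
    fun p => ‖g p‖⁻¹ • g p with hFdef
  have hgcont : Continuous g := by
    apply Continuous.add
    · exact (continuous_const.sub continuous_fst).smul continuous_const
    · exact continuous_fst.smul continuous_snd
  have hFcont : ∀ p : ℝ × EuclideanSpace ℝ (Fin n), g p ≠ 0 → ContinuousAt F p := by
    intro p hp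
    exact ((hgcont.norm.continuousAt.inv₀ (norm_ne_zero_iff.mpr hp)).smul
      hgcont.continuousAt)
  -- main continuity claim
  have key : ∀ w ∈ S, ContinuousWithinAt (fun x => (lam x, P x)) S w := by
    intro w hw
    have hwv : w ≠ v := by
      intro h
      exact hw.2 (by simp [h])
    have hmain : Filter.Tendsto (fun x => (lam x, P x)) (nhdsWithin w S)
        (nhds (lam w, P w)) := by
      apply Filter.tendsto_of_subseq_tendsto
      intro ns hns
      have hmemS : ∀ᶠ k in Filter.atTop, ns k ∈ S :=
        hns.eventually_mem self_mem_nhdsWithin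
      have hnsw : Filter.Tendsto ns Filter.atTop (nhds w) :=
        hns.mono_right nhdsWithin_le_nhds
      set a : ℕ → ℝ × EuclideanSpace ℝ (Fin n) := fun k => (lam (ns k), P (ns k)) with hadef
      have haC : ∀ᶠ k in Filter.atTop, a k ∈ C := by
        filter_upwards [hmemS] with k hk
        obtain ⟨hIoc, hMd, hnorm, _⟩ := hPlam (ns k) hk
        exact ⟨Set.mem_Icc.mpr ⟨le_of_lt hIoc.1, hIoc.2⟩,
          hMd, Metric.mem_sphere.mpr (by simpa using hnorm)⟩
      obtain ⟨p, hpC, φ, hφ, hφt⟩ := hCcompact.tendsto_subseq' haC.frequently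
      have hpK : p.2 ∈ K := hpC.2
      have hp2M : p.2 ∈ M := hpK.1.1
      have hp2n : ‖p.2‖ = 1 := by
        have hs := hpK.2
        simpa using Metric.mem_sphere.mp hs
      have hgp : g p ≠ 0 := hne p.1 hpC.1 p.2 hp2M hp2n
      have hFt : Filter.Tendsto (fun k => F (a (φ k))) Filter.atTop (nhds (F p)) :=
        ((hFcont p hgp).tendsto).comp hφt
      have hmemSφ : ∀ᶠ k in Filter.atTop, ns (φ k) ∈ S :=
        hφ.tendsto_atTop.eventually hmemS
      have hEq : ∀ᶠ k in Filter.atTop, F (a (φ k)) = ns (φ k) := by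
        filter_upwards [hmemSφ] with k hk
        obtain ⟨_, _, _, heq⟩ := hPlam (ns (φ k)) hk
        exact heq.symm
      have hnst : Filter.Tendsto (fun k => ns (φ k)) Filter.atTop (nhds (F p)) :=
        hFt.congr' hEq
      have hnst' : Filter.Tendsto (fun k => ns (φ k)) Filter.atTop (nhds w) :=
        hnsw.comp hφ.tendsto_atTop
      have hwF : w = F p := tendsto_nhds_unique hnst' hnst
      have hl0 : p.1 ≠ 0 := by
        intro h
        apply hwv
        rw [hwF]
        simp only [hFdef, hgdef, h]
        rw [sub_zero, one_smul, zero_smul, add_zero, hv1, inv_one, one_smul]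
      have hIoc : p.1 ∈ Set.Ioc (0 : ℝ) 1 :=
        ⟨lt_of_le_of_ne hpC.1.1 (Ne.symm hl0), hpC.1.2⟩
      obtain ⟨hl, hu⟩ := huniq w hw p.1 p.2 hIoc hpK.1 hp2n hwF
      refine ⟨φ, ?_⟩
      have hp : p = (lam w, P w) := by
        rw [Prod.ext_iff]
        exact ⟨hl, hu⟩
      rw [← hp]
      exact hφt
    exact hmain
  exact ⟨fun w hw => ((key w hw).snd), fun w hw => ((key w hw).fst)⟩
end

section
/- Suppose for every unit vector v ∈ ℝⁿ there exists s ∈ Y with v·c(s) > 0. Then for every nonempty Z ⊆ Y the polyhedral cone M(Z) = { v : v·(c_s/F(s) − c_z/F(z)) ≤ 0 ∀s ∈ Y∖Z, z ∈ Z; v·(c_{z'}/F(z') − c_z/F(z)) = 0 ∀z,z' ∈ Z } is strongly convex: M(Z) ∩ (−M(Z)) = {0}. -/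
open Real
open scoped InnerProductSpace BigOperators

/-- The polyhedral cone `M(Z)` from the paper. -/
def Mcone {n : ℕ} {Y : Type*} [Fintype Y] (F : Y → ℝ) (c : Y → EuclideanSpace ℝ (Fin n))
    (Z : Finset Y) : Set (EuclideanSpace ℝ (Fin n)) :=
  {v | (∀ s ∉ Z, ∀ z ∈ Z, ⟪v, (F s)⁻¹ • c s - (F z)⁻¹ • c z⟫_ℝ ≤ 0) ∧
       ∀ z ∈ Z, ∀ z' ∈ Z, ⟪v, (F z')⁻¹ • c z' - (F z)⁻¹ • c z⟫_ℝ = 0}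

theorem stmt11 (n : ℕ) (Y : Type*) [Fintype Y] (F : Y → ℝ) (hF : ∀ s, 0 < F s)
    (c : Y → EuclideanSpace ℝ (Fin n))
    (hc : ∀ v : EuclideanSpace ℝ (Fin n), ‖v‖ = 1 → ∃ s, 0 < ⟪v, c s⟫_ℝ)
    (Z : Finset Y) (hZ : Z.Nonempty) :
    Mcone F c Z ∩ (-(Mcone F c Z)) = {0} := by
  obtain ⟨z0, hz0⟩ := hZ
  ext v
  simp only [Set.mem_inter_iff, Set.mem_neg, Set.mem_singleton_iff]
  constructor
  · rintro ⟨⟨h1, h2⟩, ⟨h3, h4⟩⟩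
    by_contra hv
    have hvn : (0:ℝ) < ‖v‖ := by
      simpa [norm_pos_iff] using hv
    set a := ⟪v, (F z0)⁻¹ • c z0⟫_ℝ with ha
    have key : ∀ s, ⟪v, c s⟫_ℝ = F s * a := by
      intro s
      have hs : ⟪v, (F s)⁻¹ • c s - (F z0)⁻¹ • c z0⟫_ℝ = 0 := by
        by_cases hsZ : s ∈ Z
        · exact h2 z0 hz0 s hsZ
        · have hle := h1 s hsZ z0 hz0
          have hge := h3 s hsZ z0 hz0
          rw [inner_neg_left] at hge
          linarith
      rw [inner_sub_right] at hs
      have hsa : ⟪v, (F s)⁻¹ • c s⟫_ℝ = a := by linarith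
      rw [inner_smul_right] at hsa
      have hFs := (hF s).ne'
      rw [inv_mul_eq_div, div_eq_iff hFs, mul_comm] at hsa
      exact hsa
    rcases le_or_gt a 0 with hale | hagt
    · obtain ⟨s, hsp⟩ := hc (‖v‖⁻¹ • v) (by
        rw [norm_smul]; simp [abs_of_nonneg, hvn.le, inv_mul_cancel₀ hvn.ne'])
      rw [real_inner_smul_left, key s] at hsp
      have : F s * a ≤ 0 := mul_nonpos_of_nonneg_of_nonpos (hF s).le hale
      nlinarith [inv_pos.mpr hvn]
    · obtain ⟨s, hsp⟩ := hc (-(‖v‖⁻¹ • v)) (by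
        rw [norm_neg, norm_smul]; simp [abs_of_nonneg, hvn.le, inv_mul_cancel₀ hvn.ne'])
      rw [inner_neg_left, real_inner_smul_left, key s] at hsp
      have : 0 < F s * a := mul_pos (hF s) hagt
      nlinarith [inv_pos.mpr hvn]
  · intro h
    subst h
    refine ⟨⟨?_, ?_⟩, ?_, ?_⟩ <;> intros <;> simp
end

section
/- Let G be a finitely generated group generated as a semigroup by a finite set Y with at least two elements, F : Y → ℝ, β ∈ ℝ, and let ψ : G → [0,∞) be normalized β-harmonic: ψ_{e} = 1 and ∑_{s∈Y} e^{−βF(s)} ψ_{gs} = ψ_g for all g ∈ G. Suppose ψ is abelian (ψ_{hgk} = ψ_{hkg} for all h,g,k) and extremal in the convex set Δ of normalized abelian β-harmonic vectors. Then ψ is multiplicative: ψ_{gh} = ψ_g ψ_h for all g,h ∈ G; equivalently there is a group homomorphism c : G → ℝ with ψ_g = e^{c(g)}. -/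
open Real
open scoped BigOperators

/-- `ψ` is a normalized abelian `β`-harmonic vector on `G` (membership in `Δ`). -/
def IsAbelHarm {G : Type*} [Group G] (Y : Finset G) (F : G → ℝ) (β : ℝ) (ψ : G → ℝ) : Prop :=
  (∀ g, 0 ≤ ψ g) ∧ ψ 1 = 1 ∧
  (∀ g, ∑ s ∈ Y, Real.exp (-(β * F s)) * ψ (g * s) = ψ g) ∧
  ∀ h g k, ψ (h * g * k) = ψ (h * k * g)

private lemma shift_mem {G : Type*} [Group G] (Y : Finset G) (F : G → ℝ) (β : ℝ)
    (ψ : G → ℝ) (hψ : IsAbelHarm Y F β ψ) (s : G) (hs : 0 < ψ s) :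
    IsAbelHarm Y F β (fun g => ψ (g * s) / ψ s) := by
  obtain ⟨hpos0, hone, hharm, habel⟩ := hψ
  refine ⟨fun g => div_nonneg (hpos0 _) hs.le, ?_, ?_, ?_⟩
  · simp [one_mul, div_self hs.ne']
  · intro g
    have h1 : ∀ t ∈ Y, Real.exp (-(β * F t)) * (ψ (g * t * s) / ψ s)
        = Real.exp (-(β * F t)) * ψ (g * s * t) / ψ s := by
      intro t _; rw [habel g t s]; ring
    rw [Finset.sum_congr rfl h1, ← Finset.sum_div, hharm (g * s)]
  · intro a b c
    have e1 : ψ (a * b * c * s) = ψ (a * (c * s) * b) := by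
      rw [mul_assoc (a * b) c s]; exact habel a b (c * s)
    have e2 : ψ (a * c * b * s) = ψ (a * (c * s) * b) := by
      have h := habel (a * c) b s
      rw [h, mul_assoc a c s]
    simp only []
    rw [e1, e2]

private lemma comb_mem {G : Type*} [Group G] (Y : Finset G) (F : G → ℝ) (β : ℝ)
    (T : Finset G) (w : G → ℝ) (φ : G → G → ℝ)
    (hw : ∀ t ∈ T, 0 ≤ w t) (hsum : ∑ t ∈ T, w t = 1)
    (hφ : ∀ t ∈ T, IsAbelHarm Y F β (φ t)) :
    IsAbelHarm Y F β (fun g => ∑ t ∈ T, w t * φ t g) := by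
  refine ⟨?_, ?_, ?_, ?_⟩
  · intro g
    exact Finset.sum_nonneg fun t ht => mul_nonneg (hw t ht) ((hφ t ht).1 g)
  · have : ∀ t ∈ T, w t * φ t 1 = w t := fun t ht => by rw [(hφ t ht).2.1, mul_one]
    simp only []
    rw [Finset.sum_congr rfl this, hsum]
  · intro g
    simp only [Finset.mul_sum]
    rw [Finset.sum_comm]
    refine Finset.sum_congr rfl fun t ht => ?_
    have hh := (hφ t ht).2.2.1 g
    calc ∑ u ∈ Y, Real.exp (-(β * F u)) * (w t * φ t (g * u))
        = w t * ∑ u ∈ Y, Real.exp (-(β * F u)) * φ t (g * u) := by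
          rw [Finset.mul_sum]; exact Finset.sum_congr rfl fun u _ => by ring
      _ = w t * φ t g := by rw [hh]
  · intro a b c
    exact Finset.sum_congr rfl fun t ht => by rw [(hφ t ht).2.2.2 a b c]

theorem stmt12 (G : Type*) [Group G] (Y : Finset G) (hY : 2 ≤ Y.card)
    (hgen : ∀ g : G, ∃ l : List G, (∀ x ∈ l, x ∈ Y) ∧ l.prod = g)
    (F : G → ℝ) (β : ℝ) (ψ : G → ℝ)
    (hψ : IsAbelHarm Y F β ψ)
    (hext : ∀ φ₁ φ₂ : G → ℝ, IsAbelHarm Y F β φ₁ → IsAbelHarm Y F β φ₂ →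
      ∀ lam : ℝ, 0 < lam → lam < 1 →
        (∀ g, ψ g = lam * φ₁ g + (1 - lam) * φ₂ g) → φ₁ = φ₂) :
    (∀ g h, ψ (g * h) = ψ g * ψ h) ∧
    ∃ c : G → ℝ, (∀ g h, c (g * h) = c g + c h) ∧ ∀ g, ψ g = Real.exp (c g) := by
  classical
  obtain ⟨hpos0, hone, hharm, habel⟩ := hψ
  -- positivity of ψ everywhere
  have hzero : ∀ g, ψ g = 0 → ∀ s ∈ Y, ψ (g * s) = 0 := by
    intro g hg s hs
    have hsum := hharm g
    rw [hg] at hsum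
    have hterm : ∀ t ∈ Y, 0 ≤ Real.exp (-(β * F t)) * ψ (g * t) := fun t _ =>
      mul_nonneg (Real.exp_pos _).le (hpos0 _)
    have h0 := (Finset.sum_eq_zero_iff_of_nonneg hterm).mp hsum s hs
    exact (mul_eq_zero.mp h0).resolve_left (Real.exp_pos (-(β * F s))).ne'
  have hlist0 : ∀ l : List G, (∀ x ∈ l, x ∈ Y) → ∀ g, ψ g = 0 → ψ (g * l.prod) = 0 := by
    intro l
    induction l with
    | nil => intro _ g hg; simpa using hg
    | cons x l ih =>
      intro hmem g hg
      have h1 : ψ (g * x) = 0 := hzero g hg x (hmem x (List.mem_cons_self))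
      have h2 := ih (fun y hy => hmem y (List.mem_cons_of_mem x hy)) (g * x) h1
      simpa [mul_assoc] using h2
  have hpos : ∀ g, 0 < ψ g := by
    intro g
    rcases (hpos0 g).lt_or_eq with h | h
    · exact h
    · exfalso
      obtain ⟨l, hl, hlp⟩ := hgen g⁻¹
      have h2 := hlist0 l hl g h.symm
      rw [hlp] at h2
      simp [hone] at h2
  -- the weights
  set w : G → ℝ := fun t => Real.exp (-(β * F t)) * ψ t with hw
  have hwpos : ∀ t, 0 < w t := fun t => mul_pos (Real.exp_pos _) (hpos t)
  have hwsum : ∑ t ∈ Y, w t = 1 := by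
    have := hharm 1
    simpa [hone, hw] using this
  -- key step : multiplicativity on generators
  have hkey : ∀ s ∈ Y, ∀ g, ψ (g * s) = ψ g * ψ s := by
    intro s hs g
    have hws : 0 < w s := hwpos s
    have hws1 : w s < 1 := by
      obtain ⟨t, ht, hts⟩ := Finset.exists_mem_ne (lt_of_lt_of_le one_lt_two hY) s
      have hterase : t ∈ Y.erase s := Finset.mem_erase.mpr ⟨hts, ht⟩
      have h1 : w t ≤ ∑ u ∈ Y.erase s, w u :=
        Finset.single_le_sum (fun u _ => (hwpos u).le) hterase
      have h2 : w s + ∑ u ∈ Y.erase s, w u = 1 := by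
        rw [Finset.add_sum_erase Y w hs, hwsum]
      nlinarith [hwpos t]
    have hErase : ∑ u ∈ Y.erase s, w u = 1 - w s := by
      have h2 : w s + ∑ u ∈ Y.erase s, w u = 1 := by
        rw [Finset.add_sum_erase Y w hs, hwsum]
      linarith
    have h1ws : (0:ℝ) < 1 - w s := by linarith
    set φ1 : G → ℝ := fun g => ψ (g * s) / ψ s with hφ1def
    set φ2 : G → ℝ := fun g => ∑ t ∈ Y.erase s, (w t / (1 - w s)) * (ψ (g * t) / ψ t)
      with hφ2def
    have hφ1 : IsAbelHarm Y F β φ1 :=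
      shift_mem Y F β ψ ⟨hpos0, hone, hharm, habel⟩ s (hpos s)
    have hφ2 : IsAbelHarm Y F β φ2 := by
      refine comb_mem Y F β (Y.erase s) (fun t => w t / (1 - w s))
        (fun t g => ψ (g * t) / ψ t) (fun t _ => div_nonneg (hwpos t).le h1ws.le) ?_
        (fun t ht => shift_mem Y F β ψ ⟨hpos0, hone, hharm, habel⟩ t (hpos t))
      rw [← Finset.sum_div, hErase, div_self h1ws.ne']
    have hdecomp : ∀ g, ψ g = w s * φ1 g + (1 - w s) * φ2 g := by
      intro g
      have hA : w s * φ1 g = Real.exp (-(β * F s)) * ψ (g * s) := by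
        simp only [hφ1def, hw]
        calc Real.exp (-(β * F s)) * ψ s * (ψ (g * s) / ψ s)
            = Real.exp (-(β * F s)) * ψ (g * s) * (ψ s / ψ s) := by ring
          _ = Real.exp (-(β * F s)) * ψ (g * s) := by
              rw [div_self (hpos s).ne', mul_one]
      have hB : (1 - w s) * φ2 g = ∑ t ∈ Y.erase s, Real.exp (-(β * F t)) * ψ (g * t) := by
        simp only [hφ2def]
        rw [Finset.mul_sum]
        refine Finset.sum_congr rfl fun t ht => ?_
        simp only [hw]
        calc (1 - w s) * (Real.exp (-(β * F t)) * ψ t / (1 - w s) * (ψ (g * t) / ψ t))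
            = Real.exp (-(β * F t)) * ψ (g * t) * (((1 - w s) / (1 - w s)) * (ψ t / ψ t)) := by
              ring
          _ = Real.exp (-(β * F t)) * ψ (g * t) := by
              rw [div_self h1ws.ne', div_self (hpos t).ne', mul_one, mul_one]
      rw [hA, hB,
        Finset.add_sum_erase Y (fun t => Real.exp (-(β * F t)) * ψ (g * t)) hs]
      exact (hharm g).symm
    have heq := hext φ1 φ2 hφ1 hφ2 (w s) hws hws1 hdecomp
    have hg1 : ψ g = φ1 g := by
      have h := hdecomp g
      rw [heq] at h
      rw [heq, h]; ring
    have h2 : ψ g = ψ (g * s) / ψ s := hg1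
    rw [eq_div_iff (hpos s).ne'] at h2
    linarith
  -- multiplicativity for products of generators
  have hmul : ∀ g h : G, ψ (g * h) = ψ g * ψ h := by
    have hword : ∀ l : List G, (∀ x ∈ l, x ∈ Y) → ∀ g, ψ (g * l.prod) = ψ g * ψ l.prod := by
      intro l
      induction l with
      | nil => intro _ g; simp [hone]
      | cons x l ih =>
        intro hmem g
        have hx : x ∈ Y := hmem x (List.mem_cons_self)
        have hmem' : ∀ y ∈ l, y ∈ Y := fun y hy => hmem y (List.mem_cons_of_mem x hy)
        have h1 : ψ (g * x * l.prod) = ψ (g * x) * ψ l.prod := ih hmem' (g * x)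
        have h2 : ψ (x * l.prod) = ψ x * ψ l.prod := ih hmem' x
        have h3 : ψ (g * x) = ψ g * ψ x := hkey x hx g
        calc ψ (g * (x :: l).prod) = ψ (g * x * l.prod) := by
              rw [List.prod_cons, ← mul_assoc]
          _ = ψ g * ψ x * ψ l.prod := by rw [h1, h3]
          _ = ψ g * ψ ((x :: l).prod) := by rw [List.prod_cons, h2]; ring
    intro g h
    obtain ⟨l, hl, hlp⟩ := hgen h
    rw [← hlp]
    exact hword l hl g
  refine ⟨hmul, fun g => Real.log (ψ g), ?_, ?_⟩
  · intro g h
    show Real.log (ψ (g * h)) = Real.log (ψ g) + Real.log (ψ h)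
    rw [hmul g h, Real.log_mul (hpos g).ne' (hpos h).ne']
  · intro g
    show ψ g = Real.exp (Real.log (ψ g))
    rw [Real.exp_log (hpos g)]
end

section
/- Let β > log 2 and c(β) > 0 the positive solution of e^c + e^{−c} = e^β. Define x_n = t e^{c(β)n} + (1−t)e^{−c(β)n} and y_n = t e^{c(β)(n−1)} + (1−t)e^{−c(β)(n−1)} for t ∈ [0,1]. Then the pair (x, y) satisfies, for all n ∈ ℤ: x_n ≥ 0, y_n ≥ 0, e^β x_n = x_{n+1} + y_n, and e^β y_n = x_n + y_{n−1}. -/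
open Real

theorem stmt16 (β cβ : ℝ) (hβ : Real.log 2 < β) (hc : 0 < cβ)
    (hce : Real.exp cβ + Real.exp (-cβ) = Real.exp β)
    (t : ℝ) (ht : t ∈ Set.Icc (0 : ℝ) 1)
    (x y : ℤ → ℝ)
    (hx : ∀ n : ℤ, x n = t * Real.exp (cβ * (n : ℝ)) + (1 - t) * Real.exp (-(cβ * (n : ℝ))))
    (hy : ∀ n : ℤ, y n = t * Real.exp (cβ * ((n : ℝ) - 1)) +
      (1 - t) * Real.exp (-(cβ * ((n : ℝ) - 1)))) :
    ∀ n : ℤ, 0 ≤ x n ∧ 0 ≤ y n ∧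
      Real.exp β * x n = x (n + 1) + y n ∧
      Real.exp β * y n = x n + y (n - 1) := by
  obtain ⟨ht0, ht1⟩ := ht
  have ht1' : 0 ≤ 1 - t := by linarith
  have e1 : ∀ s : ℝ, Real.exp (cβ * (s + 1)) = Real.exp (cβ * s) * Real.exp cβ := by
    intro s; rw [← Real.exp_add]; ring_nf
  have e2 : ∀ s : ℝ, Real.exp (-(cβ * (s + 1))) = Real.exp (-(cβ * s)) * Real.exp (-cβ) := by
    intro s; rw [← Real.exp_add]; ring_nf
  have e3 : ∀ s : ℝ, Real.exp (cβ * (s - 1)) = Real.exp (cβ * s) * Real.exp (-cβ) := by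
    intro s; rw [← Real.exp_add]; ring_nf
  have e4 : ∀ s : ℝ, Real.exp (-(cβ * (s - 1))) = Real.exp (-(cβ * s)) * Real.exp cβ := by
    intro s; rw [← Real.exp_add]; ring_nf
  have huv : Real.exp cβ * Real.exp (-cβ) = 1 := by rw [← Real.exp_add]; simp
  intro n
  refine ⟨?_, ?_, ?_, ?_⟩
  · rw [hx]; positivity
  · rw [hy]; positivity
  · rw [hx, hx, hy, ← hce]
    push_cast
    simp only [e1, e2, e3, e4]
    ring
  · rw [hy, hx, hy, ← hce]
    push_cast
    simp only [e1, e2, e3, e4]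
    linear_combination (t * Real.exp (cβ * (n : ℝ)) + (1 - t) * Real.exp (-(cβ * (n : ℝ)))) * huv
end

section
/- Let Y be a finite set with F : Y → ℝ strictly positive, c : Y → ℝⁿ, and suppose the continuous function β : ℝⁿ → (0,∞) satisfies ∑_{s∈Y} exp(−β(u)F(s) + u·c(s)) = 1 for all u. If u₁, u₂ ∈ ℝⁿ and λ ∈ [0,1], then β((1−λ)u₁ + λu₂) ≤ (1−λ)β(u₁) + λβ(u₂); i.e. β is a convex function on ℝⁿ. -/
open Real
open scoped InnerProductSpace BigOperators

theorem stmt17 (n : ℕ) (Y : Type*) [Fintype Y] (F : Y → ℝ) (hF : ∀ s, 0 < F s)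
    (c : Y → EuclideanSpace ℝ (Fin n)) (B : EuclideanSpace ℝ (Fin n) → ℝ)
    (hBcont : Continuous B)
    (hB : ∀ u, 0 < B u ∧ ∑ s, Real.exp (-(B u * F s) + ⟪u, c s⟫_ℝ) = 1) :
    ∀ u₁ u₂ : EuclideanSpace ℝ (Fin n), ∀ lam : ℝ, lam ∈ Set.Icc (0 : ℝ) 1 →
      B ((1 - lam) • u₁ + lam • u₂) ≤ (1 - lam) * B u₁ + lam * B u₂ := by
  intro u₁ u₂ lam hlam
  obtain ⟨hl0, hl1⟩ := hlam
  have hl1' : 0 ≤ 1 - lam := by linarith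
  set u : EuclideanSpace ℝ (Fin n) := (1 - lam) • u₁ + lam • u₂ with hu
  set t : ℝ := (1 - lam) * B u₁ + lam * B u₂ with ht
  -- key: sum at t is ≤ 1
  have hsum : ∑ s, Real.exp (-(t * F s) + ⟪u, c s⟫_ℝ) ≤ 1 := by
    calc ∑ s, Real.exp (-(t * F s) + ⟪u, c s⟫_ℝ)
        ≤ ∑ s, ((1 - lam) * Real.exp (-(B u₁ * F s) + ⟪u₁, c s⟫_ℝ)
              + lam * Real.exp (-(B u₂ * F s) + ⟪u₂, c s⟫_ℝ)) := by
          apply Finset.sum_le_sum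
          intro s _
          have hinner : ⟪u, c s⟫_ℝ = (1 - lam) * ⟪u₁, c s⟫_ℝ + lam * ⟪u₂, c s⟫_ℝ := by
            rw [hu, inner_add_left, real_inner_smul_left, real_inner_smul_left]
          have := convexOn_exp.2 (Set.mem_univ (-(B u₁ * F s) + ⟪u₁, c s⟫_ℝ))
            (Set.mem_univ (-(B u₂ * F s) + ⟪u₂, c s⟫_ℝ)) hl1' hl0 (by ring)
          simp only [smul_eq_mul] at this
          calc Real.exp (-(t * F s) + ⟪u, c s⟫_ℝ)
              = Real.exp ((1 - lam) * (-(B u₁ * F s) + ⟪u₁, c s⟫_ℝ)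
                  + lam * (-(B u₂ * F s) + ⟪u₂, c s⟫_ℝ)) := by
                rw [hinner, ht]; ring_nf
            _ ≤ _ := this
      _ = (1 - lam) * (∑ s, Real.exp (-(B u₁ * F s) + ⟪u₁, c s⟫_ℝ))
            + lam * (∑ s, Real.exp (-(B u₂ * F s) + ⟪u₂, c s⟫_ℝ)) := by
          rw [Finset.sum_add_distrib, Finset.mul_sum, Finset.mul_sum]
      _ = 1 := by rw [(hB u₁).2, (hB u₂).2]; ring
  -- Y is nonempty
  have hne : (Finset.univ : Finset Y).Nonempty := by
    by_contra h
    rw [Finset.not_nonempty_iff_eq_empty] at h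
    have := (hB u).2
    rw [h, Finset.sum_empty] at this
    norm_num at this
  -- conclude by strict monotonicity
  by_contra hc
  push_neg at hc
  have hlt : ∑ s, Real.exp (-(B u * F s) + ⟪u, c s⟫_ℝ)
      < ∑ s, Real.exp (-(t * F s) + ⟪u, c s⟫_ℝ) := by
    apply Finset.sum_lt_sum_of_nonempty hne
    intro s _
    apply Real.exp_lt_exp.mpr
    have := hF s
    nlinarith
  rw [(hB u).2] at hlt
  linarith
end

section
/- Let Y be a finite set, F : Y → ℝ strictly positive, c : Y → ℝⁿ with the property that for every unit vector v there is s ∈ Y with v·c(s) > 0, and let β : ℝⁿ → (0,∞) be defined by ∑_{s∈Y} exp(−β(u)F(s) + u·c(s)) = 1. Fix a nonempty Z ⊆ Y, chosen maximal, with M(Z) of dimension ≥ 1, and v ∈ Int(M(Z)). Then for each s ∈ Y the limit lim_{r→∞} exp(−β(rv)F(s) + r v·c(s)) exists and equals t_s, where t ∈ Δ_Y is the unique probability vector with t_s ≠ 0 iff s ∈ Z and t_{s₁}^{1/F(s₁)} = t_{s₂}^{1/F(s₂)} for all s₁, s₂ ∈ Z. -/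
open Real Filter
open scoped InnerProductSpace BigOperators

open Set in
private lemma relint_line {E : Type*} [NormedAddCommGroup E] [NormedSpace ℝ E]
    {S : Set E} {v w : E} (hv : v ∈ intrinsicInterior ℝ S) (hw : w ∈ S) :
    ∃ t : ℝ, 0 < t ∧ v + t • (v - w) ∈ S := by
  rw [mem_intrinsicInterior] at hv
  obtain ⟨y, hy, rfl⟩ := hv
  have hwspan : w ∈ affineSpan ℝ S := subset_affineSpan ℝ S hw
  set w' : affineSpan ℝ S := ⟨w, hwspan⟩
  have hmem : ∀ t : ℝ, (y : E) + t • ((y : E) - w) ∈ affineSpan ℝ S := by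
    intro t
    have := (affineSpan ℝ S).smul_vsub_vadd_mem t y.2 hwspan y.2
    simpa [vsub_eq_sub, vadd_eq_add, add_comm] using this
  set f : ℝ → affineSpan ℝ S := fun t => ⟨(y : E) + t • ((y : E) - w), hmem t⟩
  have hf : Continuous f := by
    apply Continuous.subtype_mk
    continuity
  have hf0 : f 0 = y := by simp [f]
  have : f ⁻¹' (interior ((↑) ⁻¹' S : Set <| affineSpan ℝ S)) ∈ nhds (0 : ℝ) := by
    apply hf.continuousAt.preimage_mem_nhds
    rw [hf0]
    exact isOpen_interior.mem_nhds hy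
  obtain ⟨ε, hε, hball⟩ := Metric.mem_nhds_iff.mp this
  refine ⟨ε / 2, by positivity, ?_⟩
  have : f (ε / 2) ∈ interior ((↑) ⁻¹' S : Set <| affineSpan ℝ S) := by
    apply hball
    rw [Metric.mem_ball, Real.dist_eq, sub_zero, abs_of_pos (by positivity)]
    linarith
  simpa [f] using interior_subset this

open Set in
private lemma mcone_strict {n : ℕ} {Y : Type*} [Fintype Y] {F : Y → ℝ} {c : Y → EuclideanSpace ℝ (Fin n)}
    {Z : Finset Y} (hmax : ∀ Z' : Finset Y, Mcone F c Z = Mcone F c Z' → Z' ⊆ Z)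
    {v : EuclideanSpace ℝ (Fin n)} (hv : v ∈ intrinsicInterior ℝ (Mcone F c Z)) :
    ∀ s ∉ Z, ∀ z ∈ Z, ⟪v, (F s)⁻¹ • c s - (F z)⁻¹ • c z⟫_ℝ < 0 := by
  classical
  have expand : ∀ u : EuclideanSpace ℝ (Fin n), ∀ a b : Y,
      ⟪u, (F a)⁻¹ • c a - (F b)⁻¹ • c b⟫_ℝ = (F a)⁻¹ * ⟪u, c a⟫_ℝ - (F b)⁻¹ * ⟪u, c b⟫_ℝ := by
    intro u a b; rw [inner_sub_right, real_inner_smul_right, real_inner_smul_right]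
  intro s hs z hz
  have hvS : v ∈ Mcone F c Z := intrinsicInterior_subset hv
  rcases lt_or_eq_of_le (hvS.1 s hs z hz) with hlt | h
  · exact hlt
  exfalso
  have key : ∀ w ∈ Mcone F c Z, ∀ z' ∈ Z,
      (F s)⁻¹ * ⟪w, c s⟫_ℝ - (F z')⁻¹ * ⟪w, c z'⟫_ℝ = 0 := by
    intro w hw z' hz'
    have h1 : (F s)⁻¹ * ⟪w, c s⟫_ℝ - (F z)⁻¹ * ⟪w, c z⟫_ℝ = 0 := by
      obtain ⟨t, ht, htS⟩ := relint_line hv hw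
      have h2 := htS.1 s hs z hz
      rw [inner_add_left, real_inner_smul_left, inner_sub_left, expand, expand] at h2
      rw [expand] at h
      have h3 := hw.1 s hs z hz
      rw [expand] at h3
      nlinarith
    have h4 := hw.2 z' hz' z hz
    rw [expand] at h4
    linarith
  have hZZ : Mcone F c Z = Mcone F c (insert s Z) := by
    ext w
    simp only [Mcone, Set.mem_setOf_eq]
    constructor
    · rintro ⟨hI, hE⟩
      refine ⟨?_, ?_⟩
      · intro s' hs' z' hz'
        have hs'Z : s' ∉ Z := fun hh => hs' (Finset.mem_insert_of_mem hh)
        rw [expand]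
        rcases Finset.mem_insert.mp hz' with rfl | hz'
        · have e1 := key w ⟨hI, hE⟩ z hz
          have e2 := hI s' hs'Z z hz
          rw [expand] at e2
          linarith
        · have := hI s' hs'Z z' hz'
          rw [expand] at this
          linarith
      · intro z1 hz1 z2 hz2
        rw [expand]
        rcases Finset.mem_insert.mp hz1 with h1 | h1 <;>
          rcases Finset.mem_insert.mp hz2 with h2 | h2
        · rw [h1, h2]; ring
        · have := key w ⟨hI, hE⟩ z2 h2
          rw [h1]; linarith
        · have := key w ⟨hI, hE⟩ z1 h1
          rw [h2]; linarith
        · have := hE z1 h1 z2 h2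
          rw [expand] at this
          linarith
    · rintro ⟨hI, hE⟩
      refine ⟨?_, ?_⟩
      · intro s' hs' z' hz'
        rw [expand]
        by_cases hss : s' = s
        · subst hss
          have := hE z' (Finset.mem_insert_of_mem hz') s' (Finset.mem_insert_self s' Z)
          rw [expand] at this
          linarith
        · have := hI s' (by simp [hss, hs']) z' (Finset.mem_insert_of_mem hz')
          rw [expand] at this
          linarith
      · intro z1 hz1 z2 hz2
        exact hE z1 (Finset.mem_insert_of_mem hz1) z2 (Finset.mem_insert_of_mem hz2)
  have := hmax _ hZZ (Finset.mem_insert_self s Z)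
  exact hs this


theorem stmt18 (n : ℕ) (hn : 0 < n) (Y : Type*) [Fintype Y] (hY : 2 ≤ Fintype.card Y)
    (F : Y → ℝ) (hF : ∀ s, 0 < F s) (c : Y → EuclideanSpace ℝ (Fin n))
    (hc : ∀ v : EuclideanSpace ℝ (Fin n), ‖v‖ = 1 → ∃ s, 0 < ⟪v, c s⟫_ℝ)
    (B : EuclideanSpace ℝ (Fin n) → ℝ)
    (hB : ∀ u, 0 < B u ∧ ∑ s, Real.exp (-(B u * F s) + ⟪u, c s⟫_ℝ) = 1)
    (Z : Finset Y) (hZ : Z.Nonempty)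
    (hmax : ∀ Z' : Finset Y, Mcone F c Z = Mcone F c Z' → Z' ⊆ Z)
    (hdim : Mcone F c Z ≠ {0})
    (v : EuclideanSpace ℝ (Fin n)) (hv : v ∈ intrinsicInterior ℝ (Mcone F c Z)) :
    ∃ t : Y → ℝ, (∀ s, 0 ≤ t s) ∧ (∑ s, t s = 1) ∧
      (∀ s, t s ≠ 0 ↔ s ∈ Z) ∧
      (∀ s₁ ∈ Z, ∀ s₂ ∈ Z, t s₁ ^ (1 / F s₁) = t s₂ ^ (1 / F s₂)) ∧
      ∀ s, Filter.Tendsto (fun r : ℝ => Real.exp (-(B (r • v) * F s) + ⟪r • v, c s⟫_ℝ))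
        Filter.atTop (nhds (t s)) := by
  classical
  obtain ⟨z₀, hz₀⟩ := hZ
  have hvS : v ∈ Mcone F c Z := intrinsicInterior_subset hv
  set μ : Y → ℝ := fun s => (F s)⁻¹ * ⟪v, c s⟫_ℝ with hμ
  set lam : ℝ := μ z₀ with hlam
  have expand : ∀ u : EuclideanSpace ℝ (Fin n), ∀ a b : Y,
      ⟪u, (F a)⁻¹ • c a - (F b)⁻¹ • c b⟫_ℝ = (F a)⁻¹ * ⟪u, c a⟫_ℝ - (F b)⁻¹ * ⟪u, c b⟫_ℝ := by
    intro u a b; rw [inner_sub_right, real_inner_smul_right, real_inner_smul_right]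
  have hμZ : ∀ z ∈ Z, μ z = lam := by
    intro z hz
    have := hvS.2 z₀ hz₀ z hz
    rw [expand] at this
    simp only [hμ, hlam]
    linarith
  have hμlt : ∀ s ∉ Z, μ s < lam := by
    intro s hs
    have := mcone_strict hmax hv s hs z₀ hz₀
    rw [expand] at this
    simp only [hμ, hlam]
    linarith
  -- ψ and φ*
  set ψ : ℝ → ℝ := fun x => ∑ z ∈ Z, Real.exp (F z * x) with hψ
  have hψmono : StrictMono ψ := by
    intro x y hxy
    exact Finset.sum_lt_sum_of_nonempty ⟨z₀, hz₀⟩ fun z _ =>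
      Real.exp_lt_exp.mpr (by nlinarith [hF z])
  have hψcont : Continuous ψ := by
    apply continuous_finset_sum
    intro z _
    exact Real.continuous_exp.comp (continuous_const.mul continuous_id)
  have hψ0 : (1 : ℝ) ≤ ψ 0 := by
    have : ψ 0 = Z.card := by simp [hψ]
    rw [this]
    exact_mod_cast Finset.card_pos.mpr ⟨z₀, hz₀⟩
  have hψbot : Tendsto ψ atBot (nhds 0) := by
    have : Tendsto ψ atBot (nhds (∑ z ∈ Z, (0:ℝ))) := by
      apply tendsto_finset_sum
      intro z _
      exact Real.tendsto_exp_atBot.comp ((tendsto_const_mul_atBot_of_pos (hF z)).mpr tendsto_id)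
    simpa using this
  obtain ⟨a, ha, ha0⟩ : ∃ a, ψ a < 1 ∧ a ≤ 0 := by
    have : ∀ᶠ x in atBot, ψ x < 1 := hψbot.eventually_lt_const one_pos
    obtain ⟨a, ha⟩ := (this.and (eventually_le_atBot 0)).exists
    exact ⟨a, ha.1, ha.2⟩
  obtain ⟨φs, hφsmem, hφs⟩ : ∃ φs ∈ Set.Icc a 0, ψ φs = 1 := by
    have := intermediate_value_Icc ha0 hψcont.continuousOn (a := a) (b := 0)
    obtain ⟨x, hx, hx1⟩ := this ⟨ha.le, hψ0⟩
    exact ⟨x, hx, hx1⟩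
  have hφsneg : φs ≤ 0 := hφsmem.2
  -- the target vector t
  refine ⟨fun s => if s ∈ Z then Real.exp (F s * φs) else 0, ?_, ?_, ?_, ?_, ?_⟩
  · intro s; dsimp only; split <;> positivity
  · rw [Finset.sum_ite_mem, Finset.univ_inter]; exact hφs
  · intro s; dsimp only; split <;> simp_all [Real.exp_ne_zero]
  · intro s₁ h₁ s₂ h₂
    simp only [if_pos h₁, if_pos h₂, ← Real.exp_mul]
    rw [show F s₁ * φs * (1 / F s₁) = φs by rw [one_div, mul_comm (F s₁) φs, mul_assoc, mul_inv_cancel₀ (hF s₁).ne', mul_one],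
        show F s₂ * φs * (1 / F s₂) = φs by rw [one_div, mul_comm (F s₂) φs, mul_assoc, mul_inv_cancel₀ (hF s₂).ne', mul_one]]
  -- limits
  set φ : ℝ → ℝ := fun r => -(B (r • v)) + r * lam with hφ
  have hid : ∀ r : ℝ, ∀ s, -(B (r • v) * F s) + ⟪r • v, c s⟫_ℝ = F s * (φ r + r * (μ s - lam)) := by
    intro r s
    rw [real_inner_smul_left]
    have : ⟪v, c s⟫_ℝ = μ s * F s := by
      simp only [hμ]
      rw [mul_comm ((F s)⁻¹) _, mul_assoc, inv_mul_cancel₀ (hF s).ne', mul_one]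
    rw [this, hφ]
    ring
  have hsum : ∀ r : ℝ, ψ (φ r) + ∑ s ∈ Zᶜ, Real.exp (F s * (φ r + r * (μ s - lam))) = 1 := by
    intro r
    have h1 := (hB (r • v)).2
    calc ψ (φ r) + ∑ s ∈ Zᶜ, Real.exp (F s * (φ r + r * (μ s - lam)))
        = ∑ s ∈ Z, Real.exp (F s * (φ r + r * (μ s - lam)))
          + ∑ s ∈ Zᶜ, Real.exp (F s * (φ r + r * (μ s - lam))) := by
          congr 1
          apply Finset.sum_congr rfl
          intro z hz
          rw [hμZ z hz]
          ring_nf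
      _ = ∑ s, Real.exp (F s * (φ r + r * (μ s - lam))) := Finset.sum_add_sum_compl Z _
      _ = 1 := by rw [← h1]; exact Finset.sum_congr rfl fun s _ => by rw [hid r s]
  have hφle : ∀ r, φ r ≤ φs := by
    intro r
    have hR : 0 ≤ ∑ s ∈ Zᶜ, Real.exp (F s * (φ r + r * (μ s - lam))) :=
      Finset.sum_nonneg fun s _ => (Real.exp_pos _).le
    have : ψ (φ r) ≤ ψ φs := by rw [hφs]; linarith [hsum r]
    exact hψmono.le_iff_le.mp this
  have hφneg : ∀ r, φ r ≤ 0 := fun r => (hφle r).trans hφsneg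
  set G : ℝ → ℝ := fun r => ∑ s ∈ Zᶜ, Real.exp (F s * (μ s - lam) * r) with hG
  have hGtend : Tendsto G atTop (nhds 0) := by
    have h0 : Tendsto G atTop (nhds (∑ s ∈ Zᶜ, (0:ℝ))) := by
      apply tendsto_finset_sum
      intro s hs
      have hneg : F s * (μ s - lam) < 0 := by
        have := hμlt s (by simpa using hs)
        nlinarith [hF s]
      exact Real.tendsto_exp_atBot.comp ((tendsto_const_mul_atBot_of_neg hneg).mpr tendsto_id)
    simpa using h0
  have hRG : ∀ r, 0 ≤ r → ∑ s ∈ Zᶜ, Real.exp (F s * (φ r + r * (μ s - lam))) ≤ G r := by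
    intro r hr
    apply Finset.sum_le_sum
    intro s hs
    exact Real.exp_le_exp.mpr (by nlinarith [hF s, hφneg r])
  have hφtend : Tendsto φ atTop (nhds φs) := by
    rw [Metric.tendsto_atTop]
    intro ε hε
    have h1 : ψ (φs - ε) < 1 := by rw [← hφs]; exact hψmono (by linarith)
    have h2 : ∀ᶠ r in atTop, G r < 1 - ψ (φs - ε) := hGtend.eventually_lt_const (by linarith)
    rw [eventually_atTop] at h2
    obtain ⟨N, hN⟩ := h2
    refine ⟨max N 0, fun r hr => ?_⟩
    have h3 : ψ (φs - ε) < ψ (φ r) := by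
      have e1 := hsum r
      have e2 := hRG r (le_trans (le_max_right N 0) hr)
      have e3 := hN r (le_trans (le_max_left N 0) hr)
      linarith
    have h4 : φs - ε < φ r := hψmono.lt_iff_lt.mp h3
    rw [Real.dist_eq, abs_lt]
    constructor <;> [linarith; linarith [hφle r]]
  intro s
  by_cases hsZ : s ∈ Z
  · simp only [if_pos hsZ]
    have heq : (fun r : ℝ => Real.exp (-(B (r • v) * F s) + ⟪r • v, c s⟫_ℝ))
        = fun r => Real.exp (F s * φ r) := by
      funext r
      rw [hid r s, hμZ s hsZ, sub_self, mul_zero, add_zero]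
    rw [heq]
    have hcont : Tendsto (fun x => Real.exp (F s * x)) (nhds φs) (nhds (Real.exp (F s * φs))) :=
      (Real.continuous_exp.comp (continuous_const.mul continuous_id)).tendsto φs
    exact hcont.comp hφtend
  · simp only [if_neg hsZ]
    have hneg : F s * (μ s - lam) < 0 := by
      have := hμlt s hsZ
      nlinarith [hF s]
    apply squeeze_zero (g := fun r => Real.exp (F s * (μ s - lam) * r))
        (fun r => (Real.exp_pos _).le) ?_ ?_
    · intro r
      rw [hid r s]
      exact Real.exp_le_exp.mpr (by nlinarith [hF s, hφneg r])
    · exact Real.tendsto_exp_atBot.comp ((tendsto_const_mul_atBot_of_neg hneg).mpr tendsto_id)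
end

section
/- Let Y be a finite set and m a Borel probability measure on the product space Y^ℕ such that for some probability vector p : Y → [0,1] with ∑_y p(y) = 1, m(tY^ℕ) = ∏_{i=1}^n p(t_i) for every finite word t = (t_1,…,t_n) ∈ Yⁿ (m is Bernoulli). Let G be a group generated by Y as a semigroup, F : Y → ℝ, β ∈ ℝ, and suppose m satisfies the KMS condition: e^{βF(t)} m(tY^ℕ) = e^{βF(u)} m(uY^ℕ) whenever finite words t, u satisfy t̄ = ū in G (where t̄ is the product of the letters of t and F(t) = ∑_i F(t_i)). Then the function ψ : G → [0,∞) defined by ψ_g = e^{βF(t)} m(tY^ℕ) for any word t with t̄ = g is multiplicative: ψ_{gh} = ψ_g ψ_h for all g, h ∈ G. -/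
open Real MeasureTheory
open scoped BigOperators

theorem stmt19 (Y : Type*) [Fintype Y] [MeasurableSpace Y]
    (G : Type*) [Group G] (ι : Y → G)
    (hgen : ∀ g : G, ∃ l : List Y, (l.map ι).prod = g)
    (F : Y → ℝ) (β : ℝ)
    (m : MeasureTheory.Measure (ℕ → Y)) [MeasureTheory.IsProbabilityMeasure m]
    (p : Y → ℝ) (hp0 : ∀ s, 0 ≤ p s ∧ p s ≤ 1) (hp1 : ∑ s, p s = 1)
    (hBern : ∀ l : List Y,
      (m {ω : ℕ → Y | ∀ i : Fin l.length, ω (i : ℕ) = l.get i}).toReal = (l.map p).prod)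
    (hKMS : ∀ l l' : List Y, (l.map ι).prod = (l'.map ι).prod →
      Real.exp (β * (l.map F).sum) *
          (m {ω : ℕ → Y | ∀ i : Fin l.length, ω (i : ℕ) = l.get i}).toReal =
        Real.exp (β * (l'.map F).sum) *
          (m {ω : ℕ → Y | ∀ i : Fin l'.length, ω (i : ℕ) = l'.get i}).toReal)
    (ψ : G → ℝ)
    (hψ : ∀ (g : G) (l : List Y), (l.map ι).prod = g →
      ψ g = Real.exp (β * (l.map F).sum) *
        (m {ω : ℕ → Y | ∀ i : Fin l.length, ω (i : ℕ) = l.get i}).toReal) :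
    ∀ g h, ψ (g * h) = ψ g * ψ h := by
  intro g h
  obtain ⟨l, hl⟩ := hgen g
  obtain ⟨l', hl'⟩ := hgen h
  have hgh : ((l ++ l').map ι).prod = g * h := by
    rw [List.map_append, List.prod_append, hl, hl']
  rw [hψ _ _ hgh, hψ _ _ hl, hψ _ _ hl', hBern, hBern, hBern,
    List.map_append, List.map_append, List.sum_append, List.prod_append,
    mul_add, Real.exp_add]
  ring
end
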